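/- arXiv:1411.4584 — 4 statements merged into one kernel-verified Lean document; each statement's English description precedes it below -/
import Mathlib

section
/- Let Z_1 and Z_2 be discrete real-valued random variables each supported on at most B points. Then the total variation distance between Z_1 and Z_2 is at most sqrt(2B) times the supremum over all real α of |E[exp(2πi α Z_1)] − E[exp(2πi α Z_2)]|. -/
open Finset

noncomputable def ee (θ : ℝ) : ℂ := Complex.exp (2 * Real.pi * Complex.I * θ)

lemma ee_norm (θ : ℝ) : ‖ee θ‖ = 1 := by
  rw [ee, show (2 * Real.pi * Complex.I * θ : ℂ) = ((2 * Real.pi * θ : ℝ) : ℂ) * Complex.I by push_cast; ring]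
  exact Complex.norm_exp_ofReal_mul_I _

lemma ee_add (a b : ℝ) : ee (a + b) = ee a * ee b := by
  rw [ee, ee, ee, ← Complex.exp_add]; congr 1; push_cast; ring

lemma ee_conj (θ : ℝ) : (starRingEnd ℂ) (ee θ) = ee (-θ) := by
  rw [ee, ee, ← Complex.exp_conj]; congr 1
  simp only [map_mul, Complex.conj_ofReal, Complex.conj_I, map_ofNat]
  push_cast; ring

lemma ee_pow (m : ℕ) (θ : ℝ) : ee (m * θ) = ee θ ^ m := by
  rw [ee, ee, ← Complex.exp_nat_mul]; congr 1; push_cast; ring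

lemma ee_eq_one_iff (θ : ℝ) : ee θ = 1 ↔ ∃ n : ℤ, θ = n := by
  rw [ee, Complex.exp_eq_one_iff]
  constructor
  · rintro ⟨n, h⟩
    refine ⟨n, ?_⟩
    have h2 : (2 * Real.pi * Complex.I) * (θ:ℂ) = (2 * Real.pi * Complex.I) * (n:ℂ) := by
      rw [h]; ring
    have hne : (2 * Real.pi * Complex.I : ℂ) ≠ 0 := by
      simp [Complex.I_ne_zero, Real.pi_ne_zero]
    have := mul_left_cancel₀ hne h2
    exact_mod_cast this
  · rintro ⟨n, h⟩
    exact ⟨n, by rw [h]; push_cast; ring⟩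

lemma key (s : Finset ℝ) (Δ : ℝ → ℝ) (M : ℝ)
    (hM : ∀ α : ℝ, ‖∑ x ∈ s, (Δ x : ℂ) * ee (α * x)‖ ≤ M) :
    ∑ x ∈ s, (Δ x)^2 ≤ M^2 := by
  classical
  set D : ℝ := ∑ x ∈ s, ∑ y ∈ s, |x - y| with hD
  have hD0 : 0 ≤ D := Finset.sum_nonneg fun x _ => Finset.sum_nonneg fun y _ => abs_nonneg _
  set t : ℝ := 1 / (D + 1) with ht
  have htpos : 0 < t := by positivity
  have hkey : ∀ x ∈ s, ∀ y ∈ s, x ≠ y → ∀ n : ℤ, t * (x - y) ≠ n := by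
    intro x hx y hy hxy n hn
    have h1 : |x - y| ≤ D := by
      calc |x-y| ≤ ∑ y' ∈ s, |x - y'| := Finset.single_le_sum (f := fun y' => |x - y'|) (fun i _ => abs_nonneg _) hy
      _ ≤ D := Finset.single_le_sum (f := fun x' => ∑ y' ∈ s, |x' - y'|)
            (fun i _ => Finset.sum_nonneg fun _ _ => abs_nonneg _) hx
    have h2 : |t * (x - y)| < 1 := by
      rw [abs_mul, abs_of_pos htpos, ht, div_mul_eq_mul_div, div_lt_one (by linarith)]
      linarith
    have h3 : t * (x - y) ≠ 0 := mul_ne_zero (ne_of_gt htpos) (sub_ne_zero.mpr hxy)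
    have hn0 : n ≠ 0 := by rintro rfl; exact h3 (by exact_mod_cast hn)
    have : (1:ℝ) ≤ |(n:ℝ)| := by exact_mod_cast Int.one_le_abs hn0
    rw [hn] at h2; linarith
  set z : ℝ → ℂ := fun x => ee (t * x) with hz
  have hzoff : ∀ x ∈ s, ∀ y ∈ s, x ≠ y → z x * (starRingEnd ℂ) (z y) ≠ 1 := by
    intro x hx y hy hxy h
    have h1 : ee (t * (x - y)) = 1 := by
      rw [show t * (x - y) = t*x + (-(t*y)) by ring, ee_add, ← ee_conj]; exact h
    obtain ⟨n, hn⟩ := (ee_eq_one_iff _).mp h1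
    exact hkey x hx y hy hxy n hn
  have hznorm : ∀ x : ℝ, ‖z x‖ = 1 := fun x => ee_norm _
  have hzdiag : ∀ x : ℝ, z x * (starRingEnd ℂ) (z x) = 1 := by
    intro x
    rw [Complex.mul_conj, Complex.normSq_eq_norm_sq, hznorm]
    norm_num
  have hwnorm : ∀ x y : ℝ, ‖z x * (starRingEnd ℂ) (z y)‖ = 1 := by
    intro x y
    rw [norm_mul, RCLike.norm_conj, hznorm, hznorm]; norm_num
  set F : ℝ → ℂ := fun α => ∑ x ∈ s, (Δ x : ℂ) * ee (α * x) with hF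
  have hFm : ∀ m : ℕ, F ((m : ℝ) * t) = ∑ x ∈ s, (Δ x : ℂ) * (z x)^m := by
    intro m
    refine Finset.sum_congr rfl fun x hx => ?_
    rw [hz, show (m:ℝ) * t * x = (m:ℝ) * (t * x) by ring, ee_pow]
  set c : ℝ := ∑ x ∈ s, ∑ y ∈ s.erase x,
      |Δ x| * |Δ y| * (2 / ‖z x * (starRingEnd ℂ) (z y) - 1‖) with hc
  have hc0 : 0 ≤ c := by
    refine Finset.sum_nonneg fun x _ => Finset.sum_nonneg fun y _ => ?_
    positivity
  set T : ℝ := ∑ x ∈ s, (Δ x)^2 with hT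
  have main : ∀ N : ℕ, (N : ℝ) * T ≤ (N:ℝ) * M^2 + c := by
    intro N
    set E : ℂ := ∑ x ∈ s, ∑ y ∈ s.erase x,
        (Δ x : ℂ) * (Δ y:ℂ) * ∑ m ∈ range N, (z x * (starRingEnd ℂ) (z y))^m with hE
    have step1 : ∀ m : ℕ, (Complex.normSq (F ((m:ℝ) * t)) : ℂ)
        = ∑ x ∈ s, ∑ y ∈ s, (Δ x:ℂ)*(Δ y :ℂ) * (z x * (starRingEnd ℂ) (z y))^m := by
      intro m
      rw [← Complex.mul_conj, hFm m, map_sum, Finset.sum_mul_sum]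
      refine Finset.sum_congr rfl fun x hx => Finset.sum_congr rfl fun y hy => ?_
      rw [map_mul, map_pow, Complex.conj_ofReal, mul_pow]
      ring
    have ident : ∑ m ∈ range N, ((Complex.normSq (F ((m:ℝ) * t)) : ℂ))
        = (N:ℂ) * (∑ x ∈ s, ((Δ x:ℂ))^2) + E := by
      rw [Finset.sum_congr rfl (fun m _ => step1 m), Finset.sum_comm]
      have swap2 : ∀ x ∈ s, ∑ m ∈ range N, ∑ y ∈ s, (Δ x:ℂ)*(Δ y :ℂ) * (z x * (starRingEnd ℂ) (z y))^m
          = ((Δ x:ℂ))^2 * N + ∑ y ∈ s.erase x, (Δ x : ℂ) * (Δ y:ℂ) * ∑ m ∈ range N, (z x * (starRingEnd ℂ) (z y))^m := by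
        intro x hx
        rw [Finset.sum_comm]
        rw [← Finset.add_sum_erase s _ hx]
        congr 1
        · rw [← Finset.mul_sum]
          have : ∀ m ∈ range N, (z x * (starRingEnd ℂ) (z x))^m = 1 := by
            intro m _; rw [hzdiag]; simp
          rw [Finset.sum_congr rfl this, Finset.sum_const, Finset.card_range]
          push_cast; ring
        · exact Finset.sum_congr rfl fun y hy => by rw [Finset.mul_sum]
      rw [Finset.sum_congr rfl swap2, Finset.sum_add_distrib, hE]
      congr 1
      rw [← Finset.sum_mul]; ring
    -- take real parts
    have identR : ∑ m ∈ range N, Complex.normSq (F ((m:ℝ) * t)) = (N:ℝ) * T + E.re := by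
      have h1 : ((∑ m ∈ range N, Complex.normSq (F ((m:ℝ) * t)) : ℝ) : ℂ)
          = (((N:ℝ) * T : ℝ) : ℂ) + E := by
        rw [hT]
        push_cast
        linear_combination ident
      have := congrArg Complex.re h1
      simpa using this
    have hEre : |E.re| ≤ c := by
      calc |E.re| ≤ ‖E‖ := by exact Complex.abs_re_le_norm E
      _ ≤ c := by
        rw [hE, hc]
        refine (norm_sum_le _ _).trans (Finset.sum_le_sum fun x hx => ?_)
        refine (norm_sum_le _ _).trans (Finset.sum_le_sum fun y hy => ?_)
        rw [norm_mul, norm_mul, Complex.norm_real, Complex.norm_real, Real.norm_eq_abs, Real.norm_eq_abs]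
        gcongr
        have hyx : y ≠ x := (Finset.mem_erase.mp hy).1
        have hys : y ∈ s := (Finset.mem_erase.mp hy).2
        have hw1 : z x * (starRingEnd ℂ) (z y) ≠ 1 := hzoff x hx y hys (Ne.symm hyx)
        rw [geom_sum_eq hw1, norm_div]
        have hden : 0 < ‖z x * (starRingEnd ℂ) (z y) - 1‖ :=
          norm_pos_iff.mpr (sub_ne_zero.mpr hw1)
        gcongr
        calc ‖(z x * (starRingEnd ℂ) (z y))^N - 1‖
            ≤ ‖(z x * (starRingEnd ℂ) (z y))^N‖ + 1 := by
              refine (norm_sub_le _ _).trans ?_; norm_num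
        _ = 2 := by rw [norm_pow, hwnorm]; norm_num
    have hnormSq : ∀ m ∈ range N, Complex.normSq (F ((m:ℝ) * t)) ≤ M^2 := by
      intro m _
      rw [Complex.normSq_eq_norm_sq]
      have h0 : (0:ℝ) ≤ ‖F ((m:ℝ)*t)‖ := norm_nonneg _
      have := hM ((m:ℝ) * t)
      nlinarith
    have hsum : ∑ m ∈ range N, Complex.normSq (F ((m:ℝ) * t)) ≤ (N:ℝ) * M^2 := by
      calc ∑ m ∈ range N, Complex.normSq (F ((m:ℝ) * t)) ≤ ∑ m ∈ range N, M^2 :=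
        Finset.sum_le_sum hnormSq
      _ = (N:ℝ) * M^2 := by rw [Finset.sum_const, Finset.card_range]; ring
    have := abs_le.mp hEre
    linarith [identR, hsum, this.1, this.2]
  by_contra hcon
  push_neg at hcon
  obtain ⟨N, hN⟩ := exists_nat_gt (c / (T - M^2))
  have hTM : 0 < T - M^2 := by linarith
  have : c < (N:ℝ) * (T - M^2) := by
    rw [div_lt_iff₀ hTM] at hN
    linarith
  have := main N
  nlinarith


lemma regroup {R : Type*} [CommSemiring R] {Ω : Type} [Fintype Ω] (p : Ω → R) (Z : Ω → ℝ)
    (s : Finset ℝ) (h : ∀ ω, Z ω ∈ s) (F : ℝ → R) :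
    ∑ ω, p ω * F (Z ω) = ∑ x ∈ s, (∑ ω ∈ univ.filter (fun ω => Z ω = x), p ω) * F x := by
  classical
  rw [← Finset.sum_fiberwise_of_maps_to (fun ω _ => h ω) (fun ω => p ω * F (Z ω))]
  refine Finset.sum_congr rfl fun x hx => ?_
  rw [Finset.sum_mul]
  refine Finset.sum_congr rfl fun ω hω => ?_
  rw [(Finset.mem_filter.mp hω).2]


theorem stmt0 (B : ℕ) (Ω₁ Ω₂ : Type) [Fintype Ω₁] [Fintype Ω₂]
    (p₁ : Ω₁ → ℝ) (p₂ : Ω₂ → ℝ)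
    (hp₁ : ∀ ω, 0 ≤ p₁ ω) (hp₂ : ∀ ω, 0 ≤ p₂ ω)
    (hs₁ : ∑ ω, p₁ ω = 1) (hs₂ : ∑ ω, p₂ ω = 1)
    (Z₁ : Ω₁ → ℝ) (Z₂ : Ω₂ → ℝ)
    (hB₁ : (Finset.univ.image Z₁).card ≤ B)
    (hB₂ : (Finset.univ.image Z₂).card ≤ B)
    (M : ℝ)
    (hM : ∀ α : ℝ,
      ‖(∑ ω, (p₁ ω : ℂ) * Complex.exp (2 * Real.pi * Complex.I * (α * Z₁ ω : ℝ)))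
        - ∑ ω, (p₂ ω : ℂ) * Complex.exp (2 * Real.pi * Complex.I * (α * Z₂ ω : ℝ))‖ ≤ M) :
    ∀ A : Set ℝ,
      |(∑ ω, p₁ ω * A.indicator (fun _ => (1:ℝ)) (Z₁ ω))
        - ∑ ω, p₂ ω * A.indicator (fun _ => (1:ℝ)) (Z₂ ω)| ≤ Real.sqrt (2 * B) * M := by
  classical
  intro A
  set s : Finset ℝ := (Finset.univ.image Z₁) ∪ (Finset.univ.image Z₂) with hsdef
  have hmem1 : ∀ ω, Z₁ ω ∈ s := fun ω =>
    Finset.mem_union_left _ (Finset.mem_image_of_mem _ (Finset.mem_univ ω))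
  have hmem2 : ∀ ω, Z₂ ω ∈ s := fun ω =>
    Finset.mem_union_right _ (Finset.mem_image_of_mem _ (Finset.mem_univ ω))
  have hcard : (s.card : ℝ) ≤ 2 * B := by
    have h : s.card ≤ 2 * B := by
      rw [hsdef]
      exact le_trans (Finset.card_union_le _ _) (by omega)
    exact_mod_cast h
  set Δ : ℝ → ℝ := fun x => (∑ ω ∈ univ.filter (fun ω => Z₁ ω = x), p₁ ω)
      - (∑ ω ∈ univ.filter (fun ω => Z₂ ω = x), p₂ ω) with hΔdef
  have hM0 : 0 ≤ M := le_trans (norm_nonneg _) (hM 0)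
  have hkey : ∑ x ∈ s, (Δ x)^2 ≤ M^2 := by
    apply key
    intro α
    have h := hM α
    have r1 : ∑ ω, (p₁ ω : ℂ) * Complex.exp (2 * Real.pi * Complex.I * ((α * Z₁ ω : ℝ) : ℂ))
        = ∑ x ∈ s, (∑ ω ∈ univ.filter (fun ω => Z₁ ω = x), (p₁ ω : ℂ))
            * Complex.exp (2 * Real.pi * Complex.I * ((α * x : ℝ) : ℂ)) :=
      regroup (fun ω => (p₁ ω : ℂ)) Z₁ s hmem1
        (fun x => Complex.exp (2 * Real.pi * Complex.I * ((α * x : ℝ) : ℂ)))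
    have r2 : ∑ ω, (p₂ ω : ℂ) * Complex.exp (2 * Real.pi * Complex.I * ((α * Z₂ ω : ℝ) : ℂ))
        = ∑ x ∈ s, (∑ ω ∈ univ.filter (fun ω => Z₂ ω = x), (p₂ ω : ℂ))
            * Complex.exp (2 * Real.pi * Complex.I * ((α * x : ℝ) : ℂ)) :=
      regroup (fun ω => (p₂ ω : ℂ)) Z₂ s hmem2
        (fun x => Complex.exp (2 * Real.pi * Complex.I * ((α * x : ℝ) : ℂ)))
    rw [r1, r2, ← Finset.sum_sub_distrib] at h
    have e : ∑ x ∈ s, (Δ x : ℂ) * ee (α * x)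
        = ∑ x ∈ s, ((∑ ω ∈ univ.filter (fun ω => Z₁ ω = x), (p₁ ω : ℂ))
            * Complex.exp (2 * Real.pi * Complex.I * ((α * x : ℝ) : ℂ))
          - (∑ ω ∈ univ.filter (fun ω => Z₂ ω = x), (p₂ ω : ℂ))
            * Complex.exp (2 * Real.pi * Complex.I * ((α * x : ℝ) : ℂ))) := by
      refine Finset.sum_congr rfl fun x hx => ?_
      rw [← sub_mul, ee, hΔdef]
      push_cast
      ring
    rw [e]
    exact h
  -- indicator side
  have i1 : ∑ ω, p₁ ω * A.indicator (fun _ => (1:ℝ)) (Z₁ ω)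
      = ∑ x ∈ s, (∑ ω ∈ univ.filter (fun ω => Z₁ ω = x), p₁ ω)
          * A.indicator (fun _ => (1:ℝ)) x :=
    regroup p₁ Z₁ s hmem1 (fun x => A.indicator (fun _ => (1:ℝ)) x)
  have i2 : ∑ ω, p₂ ω * A.indicator (fun _ => (1:ℝ)) (Z₂ ω)
      = ∑ x ∈ s, (∑ ω ∈ univ.filter (fun ω => Z₂ ω = x), p₂ ω)
          * A.indicator (fun _ => (1:ℝ)) x :=
    regroup p₂ Z₂ s hmem2 (fun x => A.indicator (fun _ => (1:ℝ)) x)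
  rw [i1, i2, ← Finset.sum_sub_distrib]
  have e2 : ∀ x ∈ s, (∑ ω ∈ univ.filter (fun ω => Z₁ ω = x), p₁ ω)
          * A.indicator (fun _ => (1:ℝ)) x
        - (∑ ω ∈ univ.filter (fun ω => Z₂ ω = x), p₂ ω)
          * A.indicator (fun _ => (1:ℝ)) x
      = Δ x * A.indicator (fun _ => (1:ℝ)) x := by
    intro x hx; rw [hΔdef]; ring
  rw [Finset.sum_congr rfl e2]
  have step1 : |∑ x ∈ s, Δ x * A.indicator (fun _ => (1:ℝ)) x| ≤ ∑ x ∈ s, |Δ x| := by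
    refine (Finset.abs_sum_le_sum_abs _ _).trans (Finset.sum_le_sum fun x _ => ?_)
    rw [abs_mul]
    have hind : |A.indicator (fun _ => (1:ℝ)) x| ≤ 1 := by
      by_cases hx : x ∈ A <;> simp [hx]
    nlinarith [abs_nonneg (Δ x)]
  have step2 : (∑ x ∈ s, |Δ x|)^2 ≤ (Real.sqrt (2 * B) * M)^2 := by
    have cs := Finset.sum_mul_sq_le_sq_mul_sq s (fun _ => (1:ℝ)) (fun x => |Δ x|)
    simp only [one_mul, one_pow, Finset.sum_const, nsmul_eq_mul, mul_one, sq_abs] at cs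
    rw [mul_pow, Real.sq_sqrt (by positivity)]
    calc (∑ x ∈ s, |Δ x|)^2 ≤ (s.card : ℝ) * ∑ x ∈ s, (Δ x)^2 := cs
    _ ≤ (2 * B) * M^2 := by
        apply mul_le_mul hcard hkey (Finset.sum_nonneg fun x _ => sq_nonneg _) (by positivity)
  have hsumabs : ∑ x ∈ s, |Δ x| ≤ Real.sqrt (2 * B) * M := by
    have h := Real.sqrt_le_sqrt step2
    rwa [Real.sqrt_sq (Finset.sum_nonneg fun x _ => abs_nonneg _),
      Real.sqrt_sq (by positivity)] at h
  exact step1.trans hsumabs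
end

section
/- Let Q be a multilinear polynomial of degree d over {−1,1}^n and let x be drawn from a δ-biased distribution over {−1,1}^n. Then for every even integer p ≥ 2, E[Q(x)^p] ≤ (p−1)^{pd/2} · ‖Q‖_2^p + ‖Q‖_1^p · δ, where ‖Q‖_2 is the square root of the sum of squares of the coefficients of Q and ‖Q‖_1 is the sum of absolute values of the coefficients. -/
open Finset

/-- The map sending a boolean to the corresponding sign `±1`. -/
noncomputable def pm (b : Bool) : ℝ := if b then 1 else -1

open scoped symmDiff

lemma pm_sq (b : Bool) : pm b ^ 2 = 1 := by cases b <;> simp [pm]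

lemma pm_mul_self (b : Bool) : pm b * pm b = 1 := by cases b <;> simp [pm]

lemma pm_pow (b : Bool) (k : ℕ) : pm b ^ k = if Even k then 1 else pm b := by
  cases b
  · simp only [pm, if_false]
    rcases Nat.even_or_odd k with h | h
    · simp [h.neg_one_pow, h]
    · simp [h.neg_one_pow, Nat.not_even_iff_odd.2 h]
  · simp [pm]

/-- character collapse for products over a tuple of sets -/
lemma prod_chi {n p : ℕ} (t : Fin p → Finset (Fin n)) (x : Fin n → Bool) :
    ∏ i : Fin p, ∏ j ∈ t i, pm (x j) =
      ∏ j ∈ univ.filter (fun j : Fin n => ¬ Even (univ.filter (fun i : Fin p => j ∈ t i)).card),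
        pm (x j) := by
  have h1 : ∀ i : Fin p, ∏ j ∈ t i, pm (x j) = ∏ j : Fin n, if j ∈ t i then pm (x j) else 1 := by
    intro i
    rw [Finset.prod_ite_mem, univ_inter]
  simp_rw [h1]
  rw [Finset.prod_comm]
  have h2 : ∀ j : Fin n, ∏ i : Fin p, (if j ∈ t i then pm (x j) else 1)
      = pm (x j) ^ (univ.filter (fun i : Fin p => j ∈ t i)).card := by
    intro j
    rw [← Finset.prod_const, Finset.prod_filter]
  simp_rw [h2, pm_pow]
  rw [Finset.prod_filter]
  apply Finset.prod_congr rfl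
  intro j _
  by_cases h : Even (univ.filter (fun i : Fin p => j ∈ t i)).card <;> simp [h]

/-- sum of a character over the whole cube -/
lemma sum_chi {n : ℕ} (S : Finset (Fin n)) :
    ∑ x : Fin n → Bool, ∏ j ∈ S, pm (x j) = if S = ∅ then (2 : ℝ) ^ n else 0 := by
  have h1 : ∀ x : Fin n → Bool, ∏ j ∈ S, pm (x j) = ∏ j : Fin n, if j ∈ S then pm (x j) else 1 := by
    intro x; rw [Finset.prod_ite_mem, univ_inter]
  simp_rw [h1]
  rw [← Fintype.piFinset_univ, ← Finset.prod_univ_sum (fun _ => univ)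
    (fun j b => if j ∈ S then pm b else 1)]
  rcases eq_or_ne S ∅ with h | h
  · simp [h, Fintype.sum_bool]
  · rw [if_neg h]
    obtain ⟨j, hj⟩ := Finset.nonempty_iff_ne_empty.2 h
    apply Finset.prod_eq_zero (Finset.mem_univ j)
    simp [hj, Fintype.sum_bool, pm]
open Finset

variable {n : ℕ}

noncomputable def Qf (c : Finset (Fin n) → ℝ) (x : Fin n → Bool) : ℝ :=
  ∑ S : Finset (Fin n), c S * ∏ i ∈ S, pm (x i)

noncomputable def Et {n p : ℕ} (t : Fin p → Finset (Fin n)) : Finset (Fin n) :=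
  univ.filter (fun j : Fin n => ¬ Even (univ.filter (fun i : Fin p => j ∈ t i)).card)

/-- expansion of a weighted p-th moment over tuples -/
lemma key_expand {p : ℕ} (c : Finset (Fin n) → ℝ) (ν : (Fin n → Bool) → ℝ) :
    ∑ x : Fin n → Bool, ν x * Qf c x ^ p =
      ∑ t ∈ Fintype.piFinset (fun _ : Fin p => (univ : Finset (Finset (Fin n)))),
        (∏ i, c (t i)) * (∑ x : Fin n → Bool, ν x * ∏ j ∈ Et t, pm (x j)) := by
  have h1 : ∀ x : Fin n → Bool, Qf c x ^ p =
      ∑ t ∈ Fintype.piFinset (fun _ : Fin p => (univ : Finset (Finset (Fin n)))),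
        (∏ i, c (t i)) * ∏ j ∈ Et t, pm (x j) := by
    intro x
    have : Qf c x ^ p = ∏ _i : Fin p, Qf c x := by rw [Finset.prod_const, card_univ]; simp
    rw [this]
    unfold Qf
    rw [Finset.prod_univ_sum (fun _ => univ) (fun _ S => c S * ∏ i ∈ S, pm (x i))]
    apply Finset.sum_congr rfl
    intro t _
    rw [Finset.prod_mul_distrib, prod_chi t x]
    rfl
  simp_rw [h1, Finset.mul_sum]
  rw [Finset.sum_comm]
  exact Finset.sum_congr rfl fun t _ => Finset.sum_congr rfl fun x _ => by ring

/-- Part A: bias reduction -/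
lemma partA {p : ℕ} (c : Finset (Fin n) → ℝ) (δ : ℝ) (hδ : 0 ≤ δ)
    (μ : (Fin n → Bool) → ℝ) (hμ1 : ∑ x, μ x = 1)
    (hbias : ∀ S : Finset (Fin n), S.Nonempty → |∑ x, μ x * ∏ i ∈ S, pm (x i)| ≤ δ) :
    ∑ x : Fin n → Bool, μ x * Qf c x ^ p ≤
      (∑ x : Fin n → Bool, Qf c x ^ p) / 2 ^ n + (∑ S, |c S|) ^ p * δ := by
  have hu : ∑ x : Fin n → Bool, Qf c x ^ p
      = ∑ x : Fin n → Bool, ((2:ℝ)^n)⁻¹ * Qf c x ^ p * 2 ^ n := by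
    apply Finset.sum_congr rfl; intro x _; field_simp
  rw [key_expand c μ]
  have h2 : (∑ x : Fin n → Bool, Qf c x ^ p) / 2 ^ n
      = ∑ t ∈ Fintype.piFinset (fun _ : Fin p => (univ : Finset (Finset (Fin n)))),
        (∏ i, c (t i)) * (if Et t = ∅ then (1:ℝ) else 0) := by
    rw [div_eq_iff (by positivity : (2:ℝ)^n ≠ 0), Finset.sum_mul, hu, ← Finset.sum_mul]
    rw [key_expand c (fun _ => ((2:ℝ)^n)⁻¹), Finset.sum_mul]
    apply Finset.sum_congr rfl
    intro t _
    rw [← Finset.mul_sum, sum_chi]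
    rcases eq_or_ne (Et t) ∅ with h | h <;> simp [h] <;> ring
  rw [h2]
  have habs : ∑ t ∈ Fintype.piFinset (fun _ : Fin p => (univ : Finset (Finset (Fin n)))),
      |∏ i, c (t i)| = (∑ S, |c S|) ^ p := by
    have : (∑ S : Finset (Fin n), |c S|) ^ p = ∏ _i : Fin p, ∑ S : Finset (Fin n), |c S| := by
      rw [Finset.prod_const, card_univ]; simp
    rw [this, Finset.prod_univ_sum (fun _ => univ) (fun _ S => |c S|)]
    exact Finset.sum_congr rfl fun t _ => (Finset.abs_prod _ _)
  calc ∑ t ∈ Fintype.piFinset (fun _ : Fin p => (univ : Finset (Finset (Fin n)))),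
        (∏ i, c (t i)) * (∑ x : Fin n → Bool, μ x * ∏ j ∈ Et t, pm (x j))
      ≤ ∑ t ∈ Fintype.piFinset (fun _ : Fin p => (univ : Finset (Finset (Fin n)))),
        ((∏ i, c (t i)) * (if Et t = ∅ then (1:ℝ) else 0) + |∏ i, c (t i)| * δ) := by
        apply Finset.sum_le_sum
        intro t _
        rcases eq_or_ne (Et t) ∅ with h | h
        · simp only [h]
          have : ∑ x : Fin n → Bool, μ x * ∏ j ∈ (∅ : Finset (Fin n)), pm (x j)
              = 1 := by simpa using hμ1
          rw [this, if_pos trivial]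
          nlinarith [abs_nonneg (∏ i, c (t i))]
        · rw [if_neg h, mul_zero, zero_add]
          calc (∏ i, c (t i)) * (∑ x : Fin n → Bool, μ x * ∏ j ∈ Et t, pm (x j))
              ≤ |(∏ i, c (t i)) * (∑ x : Fin n → Bool, μ x * ∏ j ∈ Et t, pm (x j))| :=
                le_abs_self _
            _ = |∏ i, c (t i)| * |∑ x : Fin n → Bool, μ x * ∏ j ∈ Et t, pm (x j)| :=
                abs_mul _ _
            _ ≤ |∏ i, c (t i)| * δ := by
                apply mul_le_mul_of_nonneg_left
                  (hbias _ (Finset.nonempty_iff_ne_empty.2 h)) (abs_nonneg _)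
    _ = (∑ t ∈ Fintype.piFinset (fun _ : Fin p => (univ : Finset (Finset (Fin n)))),
          (∏ i, c (t i)) * (if Et t = ∅ then (1:ℝ) else 0)) + (∑ S, |c S|) ^ p * δ := by
        rw [Finset.sum_add_distrib, ← Finset.sum_mul, habs]


/-- Key binomial inequality: `C(2q, 2i) ≤ C(q, i) * (2q-1)^i`. -/
lemma binom (q : ℕ) : ∀ i, Nat.choose (2*q) (2*i) ≤ Nat.choose q i * (2*q-1)^i := by
  intro i
  induction i with
  | zero => simp
  | succ i ih =>
    rcases le_or_gt q i with h | h
    · rw [Nat.choose_eq_zero_of_lt (by omega)]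
      exact Nat.zero_le _
    · have e1 := Nat.choose_succ_right_eq (2*q) (2*i+1)
      have e2 := Nat.choose_succ_right_eq (2*q) (2*i)
      have e3 := Nat.choose_succ_right_eq q i
      have key : Nat.choose (2*q) (2*(i+1)) * ((2*i+2)*(2*i+1))
          = Nat.choose (2*q) (2*i) * ((2*q-2*i)*(2*q-(2*i+1))) := by
        have h1 : 2*(i+1) = (2*i+1)+1 := by ring
        rw [h1]
        calc Nat.choose (2*q) ((2*i+1)+1) * ((2*i+2)*(2*i+1))
            = (Nat.choose (2*q) ((2*i+1)+1) * ((2*i+1)+1)) * (2*i+1) := by ring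
          _ = (Nat.choose (2*q) (2*i+1) * (2*q-(2*i+1))) * (2*i+1) := by rw [e1]
          _ = (Nat.choose (2*q) (2*i+1) * (2*i+1)) * (2*q-(2*i+1)) := by ring
          _ = (Nat.choose (2*q) (2*i) * (2*q-2*i)) * (2*q-(2*i+1)) := by rw [e2]
          _ = Nat.choose (2*q) (2*i) * ((2*q-2*i)*(2*q-(2*i+1))) := by ring
      refine Nat.le_of_mul_le_mul_right ?_ (Nat.mul_pos (by omega) (by omega) :
        0 < (2*i+2)*(2*i+1))
      rw [key]
      calc Nat.choose (2*q) (2*i) * ((2*q-2*i)*(2*q-(2*i+1)))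
          ≤ (Nat.choose q i * (2*q-1)^i) * ((2*q-2*i)*((2*q-1)*(2*i+1))) := by
            apply Nat.mul_le_mul ih
            apply Nat.mul_le_mul_left
            calc 2*q-(2*i+1) ≤ 2*q-1 := by omega
              _ ≤ (2*q-1)*(2*i+1) := Nat.le_mul_of_pos_right _ (by omega)
        _ = (Nat.choose q i * (q - i)) * ((2*q-1)^(i+1)) * (2*(2*i+1)) := by
            rw [pow_succ]
            have h2 : 2*q-2*i = 2*(q-i) := by omega
            rw [h2]; ring
        _ = (Nat.choose q (i+1) * (i+1)) * ((2*q-1)^(i+1)) * (2*(2*i+1)) := by rw [e3]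
        _ = Nat.choose q (i+1) * (2*q-1)^(i+1) * ((2*i+2)*(2*i+1)) := by ring

/-- pointwise binomial identity for the average over a sign. -/
lemma even_pow_avg (q : ℕ) (r s : ℝ) :
    ((r+s)^(2*q) + (r-s)^(2*q))/2
      = ∑ j ∈ Finset.range (q+1), ((2*q).choose (2*j) : ℝ) * (r^(2*j) * s^(2*(q-j))) := by
  have hrs : r - s = r + (-s) := by ring
  rw [add_pow, hrs, add_pow, ← Finset.sum_add_distrib]
  have h1 : ∀ k ∈ Finset.range (2*q+1),
      r^k * s^(2*q-k) * ((2*q).choose k : ℝ) + r^k * (-s)^(2*q-k) * ((2*q).choose k) =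
      if Even k then 2 * (((2*q).choose k : ℝ) * (r^k * s^(2*q-k))) else 0 := by
    intro k hk
    rw [Finset.mem_range] at hk
    rcases Nat.even_or_odd k with h | h
    · have he : Even (2*q - k) := by
        rw [Nat.even_sub (by omega)]
        simp [h, even_two_mul]
      rw [he.neg_pow, if_pos h]; ring
    · have ho : Odd (2*q - k) := by
        rcases Nat.even_or_odd (2*q-k) with h2 | h2
        · exfalso
          rw [Nat.even_sub (by omega)] at h2
          exact (Nat.not_even_iff_odd.2 h) (h2.1 (even_two_mul q))
        · exact h2
      rw [ho.neg_pow, if_neg (Nat.not_even_iff_odd.2 h)]; ring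
  rw [Finset.sum_congr rfl h1, Finset.sum_ite, Finset.sum_const_zero, add_zero]
  rw [← Finset.mul_sum]
  rw [mul_div_cancel_left₀ _ (two_ne_zero)]
  symm
  apply Finset.sum_nbij' (fun j => 2*j) (fun k => k/2)
  · intro j hj
    simp only [Finset.mem_filter, Finset.mem_range] at *
    exact ⟨by omega, even_two_mul j⟩
  · intro k hk
    simp only [Finset.mem_filter, Finset.mem_range] at *
    obtain ⟨hk1, j, hj⟩ := hk
    omega
  · intro j hj; omega
  · intro k hk
    simp only [Finset.mem_filter, Finset.mem_range] at hk
    obtain ⟨hk1, j, hj⟩ := hk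
    omega
  · intro j hj
    rw [Finset.mem_range] at hj
    have : 2*q - 2*j = 2*(q-j) := by omega
    rw [this]

/-- sum bound via the binomial inequality. -/
lemma sum_binom_bound (q : ℕ) (α β : ℝ) (hα : 0 ≤ α) (hβ : 0 ≤ β) :
    ∑ j ∈ Finset.range (q+1), ((2*q).choose (2*j) : ℝ) * (α^j * β^(q-j))
      ≤ (α + ((2*q-1:ℕ):ℝ)*β)^q := by
  rw [add_pow]
  apply Finset.sum_le_sum
  intro j hj
  rw [Finset.mem_range] at hj
  have hsym : (2*q).choose (2*j) = (2*q).choose (2*(q-j)) := by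
    rw [← Nat.choose_symm (by omega : 2*j ≤ 2*q)]
    congr 1; omega
  have h := binom q (q - j)
  rw [← hsym] at h
  calc ((2*q).choose (2*j) : ℝ) * (α^j * β^(q-j))
      ≤ ((q.choose (q-j) : ℝ) * ((2*q-1:ℕ):ℝ)^(q-j)) * (α^j * β^(q-j)) := by
        apply mul_le_mul_of_nonneg_right _ (by positivity)
        calc ((2*q).choose (2*j) : ℝ) ≤ ((q.choose (q-j) * (2*q-1)^(q-j) : ℕ) : ℝ) :=
          Nat.cast_le.2 h
        _ = _ := by push_cast; ring
    _ = α^j * (((2*q-1:ℕ):ℝ)*β)^(q-j) * (q.choose j : ℝ) := by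
        rw [mul_pow, Nat.choose_symm (by omega : j ≤ q)]; ring

variable {n : ℕ}
lemma chi_mul (S T : Finset (Fin n)) (x : Fin n → Bool) :
    (∏ i ∈ S, pm (x i)) * (∏ i ∈ T, pm (x i)) = ∏ i ∈ S ∆ T, pm (x i) := by
  have h : ∀ U : Finset (Fin n), ∏ i ∈ U, pm (x i) = ∏ i : Fin n, if i ∈ U then pm (x i) else 1 :=
    fun U => by rw [Finset.prod_ite_mem, univ_inter]
  rw [h S, h T, h (S ∆ T), ← Finset.prod_mul_distrib]
  apply Finset.prod_congr rfl
  intro i _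
  by_cases hS : i ∈ S <;> by_cases hT : i ∈ T <;>
    simp [hS, hT, Finset.mem_symmDiff, pm_mul_self]

/-- Hölder's inequality for the uniform measure on the cube. -/
lemma holder_uniform {q : ℕ} (hq : 1 ≤ q) (j : ℕ) (hj : j ≤ q) (R S : (Fin n → Bool) → ℝ) :
    (∑ x : Fin n → Bool, R x ^ (2*j) * S x ^ (2*(q-j))) / 2^n ≤
      ((∑ x : Fin n → Bool, R x ^ (2*q)) / 2^n) ^ ((j:ℝ)/q) *
      ((∑ x : Fin n → Bool, S x ^ (2*q)) / 2^n) ^ (((q-j:ℕ):ℝ)/q) := by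
  have hq0 : (q:ℝ) ≠ 0 := by positivity
  have hA : (0:ℝ) ≤ (∑ x : Fin n → Bool, R x ^ (2*q)) / 2^n := by
    apply div_nonneg _ (by positivity)
    exact Finset.sum_nonneg fun x _ => by rw [mul_comm, pow_mul]; positivity
  have hB : (0:ℝ) ≤ (∑ x : Fin n → Bool, S x ^ (2*q)) / 2^n := by
    apply div_nonneg _ (by positivity)
    exact Finset.sum_nonneg fun x _ => by rw [mul_comm, pow_mul]; positivity
  rcases Nat.eq_zero_or_pos j with rfl | hj0
  · simp [mul_zero, div_self hq0]
  rcases eq_or_lt_of_le hj with rfl | hjq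
  · simp [mul_zero, div_self hq0]
  -- 0 < j < q : genuine Hölder
  set w : ℝ := ((2:ℝ)^n)⁻¹ with hw
  have hw0 : 0 < w := by positivity
  set P : ℝ := (q:ℝ)/j with hP
  set Pc : ℝ := (q:ℝ)/((q-j:ℕ):ℝ) with hPc
  have hqj0 : ((q-j:ℕ):ℝ) ≠ 0 := by
    have : 0 < q - j := by omega
    positivity
  have hj0' : ((j:ℕ):ℝ) ≠ 0 := by positivity
  have hconj : P.HolderConjugate Pc := by
    refine Real.holderConjugate_iff.mpr ⟨?_, ?_⟩
    · rw [hP, lt_div_iff₀ (by positivity)]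
      norm_num
      exact_mod_cast hjq
    · rw [hP, hPc, inv_div, inv_div, ← add_div, div_eq_one_iff_eq hq0]
      push_cast [Nat.cast_sub hj]
      ring
  have hmain := Real.inner_le_Lp_mul_Lq_of_nonneg Finset.univ hconj
    (f := fun x : Fin n → Bool => w ^ (1/P) * R x ^ (2*j))
    (g := fun x : Fin n → Bool => w ^ (1/Pc) * S x ^ (2*(q-j)))
    (fun x _ => by
      apply mul_nonneg (Real.rpow_nonneg hw0.le _)
      rw [mul_comm, pow_mul]; positivity)
    (fun x _ => by
      apply mul_nonneg (Real.rpow_nonneg hw0.le _)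
      rw [mul_comm, pow_mul]; positivity)
  have hPpos : 0 < P := hconj.pos
  have hPcpos : 0 < Pc := hconj.symm.pos
  have hFP : ∀ (F : (Fin n → Bool) → ℝ) (m : ℕ) (E : ℝ), 0 < E → (m:ℝ) * E = (q:ℝ) →
      ∀ x : Fin n → Bool, (w ^ (1/E) * F x ^ (2*m)) ^ E = w * F x ^ (2*q) := by
    intro F m E hE hm x
    have h2m : F x ^ (2*m) = (F x ^ 2) ^ m := by rw [← pow_mul, mul_comm]
    have h2q : F x ^ (2*q) = (F x ^ 2) ^ q := by rw [← pow_mul, mul_comm]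
    have hF2 : (0:ℝ) ≤ F x ^ 2 := sq_nonneg _
    rw [h2m, h2q,
      Real.mul_rpow (Real.rpow_nonneg hw0.le _) (by positivity : (0:ℝ) ≤ (F x ^ 2)^m)]
    congr 1
    · rw [← Real.rpow_mul hw0.le, one_div_mul_cancel hE.ne', Real.rpow_one]
    · rw [← Real.rpow_natCast (F x ^ 2) m, ← Real.rpow_mul hF2, hm, Real.rpow_natCast]
  have hL : ∑ x : Fin n → Bool, (w ^ (1/P) * R x ^ (2*j)) * (w ^ (1/Pc) * S x ^ (2*(q-j)))
      = (∑ x : Fin n → Bool, R x ^ (2*j) * S x ^ (2*(q-j))) / 2^n := by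
    rw [Finset.sum_div]
    apply Finset.sum_congr rfl
    intro x _
    have hww : w ^ (1/P) * w ^ (1/Pc) = w := by
      rw [← Real.rpow_add hw0, one_div, one_div, hconj.inv_add_inv_eq_one, Real.rpow_one]
    calc w ^ (1/P) * R x ^ (2*j) * (w ^ (1/Pc) * S x ^ (2*(q-j)))
        = (w ^ (1/P) * w ^ (1/Pc)) * (R x ^ (2*j) * S x ^ (2*(q-j))) := by ring
      _ = _ := by rw [hww, hw, inv_mul_eq_div]
  have hR : (∑ x : Fin n → Bool, (w ^ (1/P) * R x ^ (2*j)) ^ P) ^ (1/P)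
      = ((∑ x : Fin n → Bool, R x ^ (2*q)) / 2^n) ^ ((j:ℝ)/q) := by
    have : ∀ x : Fin n → Bool, (w ^ (1/P) * R x ^ (2*j)) ^ P = w * R x ^ (2*q) :=
      hFP R j P hPpos (by rw [hP, ← mul_div_assoc, mul_div_cancel_left₀ _ hj0'])
    rw [Finset.sum_congr rfl (fun x _ => this x), ← Finset.mul_sum, hw, inv_mul_eq_div, hP,
      one_div_div]
  have hS : (∑ x : Fin n → Bool, (w ^ (1/Pc) * S x ^ (2*(q-j))) ^ Pc) ^ (1/Pc)
      = ((∑ x : Fin n → Bool, S x ^ (2*q)) / 2^n) ^ (((q-j:ℕ):ℝ)/q) := by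
    have : ∀ x : Fin n → Bool, (w ^ (1/Pc) * S x ^ (2*(q-j))) ^ Pc = w * S x ^ (2*q) :=
      hFP S (q-j) Pc hPcpos (by rw [hPc, ← mul_div_assoc, mul_div_cancel_left₀ _ hqj0])
    rw [Finset.sum_congr rfl (fun x _ => this x), ← Finset.mul_sum, hw, inv_mul_eq_div, hPc,
      one_div_div]
  rw [hL, hR, hS] at hmain
  exact hmain


lemma cube_sum {n : ℕ} (F : (Fin (n+1) → Bool) → ℝ) :
    ∑ x : Fin (n+1) → Bool, F x
      = ∑ y : Fin n → Bool, (F (Fin.cons true y) + F (Fin.cons false y)) := by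
  rw [← (Fintype.sum_equiv (Fin.consEquiv (fun _ : Fin (n+1) => Bool))
    (fun p => F (Fin.cons p.1 p.2)) F (fun p => rfl))]
  rw [Fintype.sum_prod_type]
  rw [Fintype.sum_bool]
  rw [← Finset.sum_add_distrib]

noncomputable def cR {n : ℕ} (c : Finset (Fin (n+1)) → ℝ) (T : Finset (Fin n)) : ℝ :=
  c (T.map (Fin.succEmb n))

noncomputable def cS {n : ℕ} (c : Finset (Fin (n+1)) → ℝ) (T : Finset (Fin n)) : ℝ :=
  c (insert 0 (T.map (Fin.succEmb n)))

lemma zero_not_mem_map {n : ℕ} (T : Finset (Fin n)) : (0 : Fin (n+1)) ∉ T.map (Fin.succEmb n) := by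
  simp [Finset.mem_map, Fin.succ_ne_zero]

lemma decomp {n : ℕ} (c : Finset (Fin (n+1)) → ℝ) (b : Bool) (y : Fin n → Bool) :
    Qf c (Fin.cons b y) = Qf (cR c) y + pm b * Qf (cS c) y := by
  unfold Qf
  rw [← Finset.sum_filter_add_sum_filter_not Finset.univ (fun U => (0 : Fin (n+1)) ∈ U)]
  have hprod : ∀ T : Finset (Fin n),
      ∏ i ∈ T.map (Fin.succEmb n), pm ((Fin.cons b y : Fin (n+1) → Bool) i) = ∏ j ∈ T, pm (y j) := by
    intro T
    rw [Finset.prod_map]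
    exact Finset.prod_congr rfl fun j _ => by simp [Fin.cons_succ]
  have h1 : ∑ U ∈ Finset.univ.filter (fun U => (0 : Fin (n+1)) ∉ U),
      c U * ∏ i ∈ U, pm ((Fin.cons b y : Fin (n+1) → Bool) i) = Qf (cR c) y := by
    unfold Qf cR
    apply Finset.sum_nbij' (fun U => U.preimage Fin.succ (Fin.succ_injective n).injOn)
      (fun T => T.map (Fin.succEmb n))
    · intro U hU; exact Finset.mem_univ _
    · intro T hT
      simp only [Finset.mem_filter, Finset.mem_univ, true_and]
      exact zero_not_mem_map T
    · intro U hU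
      simp only [Finset.mem_filter, Finset.mem_univ, true_and] at hU
      rw [Finset.map_eq_image]
      have := Finset.image_preimage (Fin.succ : Fin n → Fin (n+1)) U
        ((Fin.succ_injective n).injOn)
      rw [show (⇑(Fin.succEmb n)) = (Fin.succ : Fin n → Fin (n+1)) from rfl, this]
      rw [Finset.filter_eq_self]
      intro i hi
      rw [Set.mem_range]
      exact Fin.exists_succ_eq.mpr (fun h => hU (h ▸ hi))
    · intro T hT
      exact Finset.preimage_map (Fin.succEmb n) T
    · intro U hU
      simp only [Finset.mem_filter, Finset.mem_univ, true_and] at hU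
      have hmap : (U.preimage Fin.succ (Fin.succ_injective n).injOn).map (Fin.succEmb n) = U := by
        rw [Finset.map_eq_image]
        have := Finset.image_preimage (Fin.succ : Fin n → Fin (n+1)) U
          ((Fin.succ_injective n).injOn)
        rw [show (⇑(Fin.succEmb n)) = (Fin.succ : Fin n → Fin (n+1)) from rfl, this]
        rw [Finset.filter_eq_self]
        intro i hi
        rw [Set.mem_range]
        exact Fin.exists_succ_eq.mpr (fun h => hU (h ▸ hi))
      rw [← hprod, hmap]
  have h2 : ∑ U ∈ Finset.univ.filter (fun U => (0 : Fin (n+1)) ∈ U),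
      c U * ∏ i ∈ U, pm ((Fin.cons b y : Fin (n+1) → Bool) i) = pm b * Qf (cS c) y := by
    unfold Qf cS
    rw [Finset.mul_sum]
    apply Finset.sum_nbij' (fun U => (U.erase 0).preimage Fin.succ (Fin.succ_injective n).injOn)
      (fun T => insert 0 (T.map (Fin.succEmb n)))
    · intro U hU; exact Finset.mem_univ _
    · intro T hT
      simp only [Finset.mem_filter, Finset.mem_univ, true_and]
      exact Finset.mem_insert_self _ _
    · intro U hU
      simp only [Finset.mem_filter, Finset.mem_univ, true_and] at hU
      have herase : ((U.erase 0).preimage Fin.succ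
          (Fin.succ_injective n).injOn).map (Fin.succEmb n) = U.erase 0 := by
        rw [Finset.map_eq_image]
        have := Finset.image_preimage (Fin.succ : Fin n → Fin (n+1)) (U.erase 0)
          ((Fin.succ_injective n).injOn)
        rw [show (⇑(Fin.succEmb n)) = (Fin.succ : Fin n → Fin (n+1)) from rfl, this]
        rw [Finset.filter_eq_self]
        intro i hi
        rw [Set.mem_range]
        exact Fin.exists_succ_eq.mpr (Finset.ne_of_mem_erase hi)
      rw [herase, Finset.insert_erase hU]
    · intro T hT
      rw [Finset.erase_insert (zero_not_mem_map T)]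
      exact Finset.preimage_map (Fin.succEmb n) T
    · intro U hU
      simp only [Finset.mem_filter, Finset.mem_univ, true_and] at hU
      have herase : ((U.erase 0).preimage Fin.succ
          (Fin.succ_injective n).injOn).map (Fin.succEmb n) = U.erase 0 := by
        rw [Finset.map_eq_image]
        have := Finset.image_preimage (Fin.succ : Fin n → Fin (n+1)) (U.erase 0)
          ((Fin.succ_injective n).injOn)
        rw [show (⇑(Fin.succEmb n)) = (Fin.succ : Fin n → Fin (n+1)) from rfl, this]
        rw [Finset.filter_eq_self]
        intro i hi
        rw [Set.mem_range]
        exact Fin.exists_succ_eq.mpr (Finset.ne_of_mem_erase hi)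
      have hU' : U = insert 0 (((U.erase 0).preimage Fin.succ
          (Fin.succ_injective n).injOn).map (Fin.succEmb n)) := by
        rw [herase, Finset.insert_erase hU]
      calc c U * ∏ i ∈ U, pm ((Fin.cons b y : Fin (n+1) → Bool) i)
          = c U * ∏ i ∈ insert 0 (((U.erase 0).preimage Fin.succ
              (Fin.succ_injective n).injOn).map (Fin.succEmb n)), pm ((Fin.cons b y : Fin (n+1) → Bool) i) := by
            rw [← hU']
        _ = _ := by
            rw [Finset.prod_insert (zero_not_mem_map _), hprod, ← hU']
            simp only [Fin.cons_zero]
            ring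
  rw [h1, h2]
  unfold Qf
  ring

/-- Parseval for the uniform measure. -/
lemma parseval {n : ℕ} (c : Finset (Fin n) → ℝ) :
    (∑ x : Fin n → Bool, Qf c x ^ 2) / 2^n = ∑ S : Finset (Fin n), c S ^ 2 := by
  have hchi : ∀ S : Finset (Fin n), ∑ x : Fin n → Bool, ∏ j ∈ S, pm (x j)
      = if S = ∅ then (2:ℝ)^n else 0 := sum_chi
  have h1 : ∀ x : Fin n → Bool, Qf c x ^ 2 = ∑ S : Finset (Fin n), ∑ T : Finset (Fin n),
      c S * c T * ∏ i ∈ S ∆ T, pm (x i) := by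
    intro x
    rw [sq]
    unfold Qf
    rw [Finset.sum_mul_sum]
    exact Finset.sum_congr rfl fun S _ => Finset.sum_congr rfl fun T _ => by
      rw [← chi_mul]; ring
  simp_rw [h1]
  rw [Finset.sum_comm]
  have h3 : ∀ S T : Finset (Fin n), (S ∆ T = ∅) ↔ S = T := fun S T => by
    rw [← Finset.bot_eq_empty, symmDiff_eq_bot]
  have h2 : ∀ S : Finset (Fin n), ∑ x : Fin n → Bool, ∑ T : Finset (Fin n),
      c S * c T * ∏ i ∈ S ∆ T, pm (x i) = c S ^ 2 * 2^n := by
    intro S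
    rw [Finset.sum_comm]
    have h4 : ∀ T : Finset (Fin n), ∑ x : Fin n → Bool, c S * c T * ∏ i ∈ S ∆ T, pm (x i)
        = c S * c T * (if S ∆ T = ∅ then (2:ℝ)^n else 0) := fun T => by
      rw [← Finset.mul_sum, hchi]
    rw [Finset.sum_congr rfl (fun T _ => h4 T), Finset.sum_eq_single S]
    · rw [if_pos ((h3 S S).2 rfl)]; ring
    · intro T _ hTS
      rw [if_neg (fun h => hTS ((h3 S T).1 h).symm), mul_zero]
    · intro h; exact absurd (Finset.mem_univ S) h
  rw [Finset.sum_congr rfl (fun S _ => h2 S), ← Finset.sum_mul,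
    mul_div_cancel_right₀ _ (by positivity : ((2:ℝ)^n) ≠ 0)]

set_option maxHeartbeats 1600000 in
lemma hyper (q : ℕ) (hq : 1 ≤ q) : ∀ (n d : ℕ) (c : Finset (Fin n) → ℝ),
    (∀ S, d < S.card → c S = 0) →
    (∑ x : Fin n → Bool, Qf c x ^ (2*q)) / 2^n ≤
      (((2*q-1 : ℕ) : ℝ)^d * ((∑ x : Fin n → Bool, Qf c x ^ 2) / 2^n))^q := by
  have hq0 : (q:ℝ) ≠ 0 := by positivity
  have hK1 : (1:ℝ) ≤ ((2*q-1:ℕ):ℝ) := by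
    have : 1 ≤ 2*q-1 := by omega
    exact_mod_cast this
  have hK0 : (0:ℝ) ≤ ((2*q-1:ℕ):ℝ) := by linarith
  intro n
  induction n with
  | zero =>
    intro d c hdeg
    have hSub : ∀ S : Finset (Fin 0), S = ∅ := fun S => Finset.eq_empty_of_isEmpty S
    have h0 : ∀ x : Fin 0 → Bool, Qf c x = c ∅ := by
      intro x
      unfold Qf
      rw [Finset.sum_eq_single ∅ (fun S _ hne => absurd (hSub S) hne)
        (fun h => absurd (Finset.mem_univ ∅) h)]
      simp
    have hx : ∀ (g : (Fin 0 → Bool) → ℝ), ∑ x : Fin 0 → Bool, g x = g (fun i => i.elim0) :=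
      fun g => Fintype.sum_subsingleton g _
    rw [hx, hx, h0]
    simp only [pow_zero, div_one]
    have h1 : (1:ℝ) ≤ (((2*q-1:ℕ):ℝ))^d := one_le_pow₀ hK1
    calc c ∅ ^(2*q) = (c ∅^2)^q := by rw [← pow_mul, mul_comm]
      _ ≤ ((((2*q-1:ℕ):ℝ))^d * c ∅^2)^q := by
          apply pow_le_pow_left₀ (sq_nonneg _)
          nlinarith [sq_nonneg (c ∅)]
  | succ n ihn =>
    intro d c hdeg
    set R := Qf (cR c) with hR
    set Sf := Qf (cS c) with hSf
    have hdegR : ∀ T : Finset (Fin n), d < T.card → cR c T = 0 := by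
      intro T hT; unfold cR; apply hdeg; rwa [Finset.card_map]
    have hdegS : ∀ T : Finset (Fin n), d - 1 < T.card → cS c T = 0 := by
      intro T hT; unfold cS; apply hdeg
      rw [Finset.card_insert_of_notMem (zero_not_mem_map T), Finset.card_map]
      omega
    have hpmt : pm true = 1 := by simp [pm]
    have hpmf : pm false = -1 := by simp [pm]
    have hcube2q : (∑ x : Fin (n+1) → Bool, Qf c x ^ (2*q)) / 2^(n+1)
        = ∑ j ∈ Finset.range (q+1), ((2*q).choose (2*j) : ℝ) *
            ((∑ y : Fin n → Bool, R y ^(2*j) * Sf y ^(2*(q-j))) / 2^n) := by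
      rw [cube_sum]
      have hpt : ∀ y : Fin n → Bool,
          Qf c (Fin.cons true y) ^ (2*q) + Qf c (Fin.cons false y) ^(2*q)
          = 2 * ∑ j ∈ Finset.range (q+1), ((2*q).choose (2*j) : ℝ) *
              (R y ^(2*j) * Sf y ^(2*(q-j))) := by
        intro y
        rw [decomp, decomp, hpmt, hpmf, one_mul]
        have h2 : R y + (-1) * Sf y = R y - Sf y := by ring
        rw [h2]
        linarith [even_pow_avg q (R y) (Sf y)]
      rw [Finset.sum_congr rfl (fun y _ => hpt y), ← Finset.mul_sum, Finset.sum_comm]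
      have e2 : ∀ j, ∑ y : Fin n → Bool, ((2*q).choose (2*j):ℝ) * (R y ^(2*j) * Sf y ^(2*(q-j)))
          = ((2*q).choose (2*j):ℝ) * ∑ y : Fin n → Bool, R y ^(2*j) * Sf y ^(2*(q-j)) :=
        fun j => (Finset.mul_sum _ _ _).symm
      rw [Finset.sum_congr rfl (fun j _ => e2 j), pow_succ]
      have e3 : (2 * ∑ j ∈ Finset.range (q+1), ((2*q).choose (2*j):ℝ) *
            ∑ y : Fin n → Bool, R y ^(2*j) * Sf y ^(2*(q-j))) / ((2:ℝ)^n * 2)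
          = (∑ j ∈ Finset.range (q+1), ((2*q).choose (2*j):ℝ) *
            ∑ y : Fin n → Bool, R y ^(2*j) * Sf y ^(2*(q-j))) / 2^n := by
        rw [mul_comm ((2:ℝ)^n) 2, mul_div_mul_left _ _ (two_ne_zero)]
      rw [e3, Finset.sum_div]
      exact Finset.sum_congr rfl fun j _ => by rw [mul_div_assoc]
    set A := (∑ y : Fin n → Bool, R y ^ (2*q)) / 2^n with hA
    set B := (∑ y : Fin n → Bool, Sf y ^ (2*q)) / 2^n with hB
    have hA0 : 0 ≤ A := div_nonneg
      (Finset.sum_nonneg fun y _ => by rw [mul_comm, pow_mul]; positivity) (by positivity)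
    have hB0 : 0 ≤ B := div_nonneg
      (Finset.sum_nonneg fun y _ => by rw [mul_comm, pow_mul]; positivity) (by positivity)
    set α := A ^ ((q:ℝ)⁻¹) with hα
    set β := B ^ ((q:ℝ)⁻¹) with hβ
    have hα0 : 0 ≤ α := Real.rpow_nonneg hA0 _
    have hβ0 : 0 ≤ β := Real.rpow_nonneg hB0 _
    have hαj : ∀ j : ℕ, A ^ ((j:ℝ)/q) = α ^ j := by
      intro j
      rw [hα, ← Real.rpow_natCast (A ^ ((q:ℝ)⁻¹)) j, ← Real.rpow_mul hA0, div_eq_inv_mul]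
    have hβj : ∀ j : ℕ, B ^ ((j:ℝ)/q) = β ^ j := by
      intro j
      rw [hβ, ← Real.rpow_natCast (B ^ ((q:ℝ)⁻¹)) j, ← Real.rpow_mul hB0, div_eq_inv_mul]
    have hsum : (∑ x : Fin (n+1) → Bool, Qf c x ^ (2*q)) / 2^(n+1)
        ≤ (α + ((2*q-1:ℕ):ℝ)*β)^q := by
      rw [hcube2q]
      calc ∑ j ∈ Finset.range (q+1), ((2*q).choose (2*j) : ℝ) *
            ((∑ y : Fin n → Bool, R y ^(2*j) * Sf y ^(2*(q-j))) / 2^n)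
          ≤ ∑ j ∈ Finset.range (q+1), ((2*q).choose (2*j) : ℝ) * (α^j * β^(q-j)) := by
            apply Finset.sum_le_sum
            intro j hj
            rw [Finset.mem_range] at hj
            apply mul_le_mul_of_nonneg_left _ (by positivity)
            calc (∑ y : Fin n → Bool, R y ^(2*j) * Sf y ^(2*(q-j))) / 2^n
                ≤ A ^ ((j:ℝ)/q) * B ^ (((q-j:ℕ):ℝ)/q) := holder_uniform hq j (by omega) R Sf
              _ = α^j * β^(q-j) := by rw [hαj j, hβj (q-j)]
        _ ≤ _ := sum_binom_bound q α β hα0 hβ0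
    have hroot : ∀ (X Y : ℝ), 0 ≤ X → 0 ≤ Y → X ≤ Y^q → X ^ ((q:ℝ)⁻¹) ≤ Y := by
      intro X Y hX hY h
      calc X ^ ((q:ℝ)⁻¹) ≤ (Y^q) ^ ((q:ℝ)⁻¹) :=
            Real.rpow_le_rpow hX h (by positivity)
        _ = Y := by
            rw [← Real.rpow_natCast Y q, ← Real.rpow_mul hY, mul_inv_cancel₀ hq0,
              Real.rpow_one]
    set ER : ℝ := (∑ y : Fin n → Bool, R y ^ 2) / 2^n with hER
    set ES : ℝ := (∑ y : Fin n → Bool, Sf y ^ 2) / 2^n with hES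
    have hER0 : 0 ≤ ER := div_nonneg (Finset.sum_nonneg fun y _ => sq_nonneg _) (by positivity)
    have hES0 : 0 ≤ ES := div_nonneg (Finset.sum_nonneg fun y _ => sq_nonneg _) (by positivity)
    have hαle : α ≤ ((2*q-1:ℕ):ℝ)^d * ER :=
      hroot A _ hA0 (by positivity) (ihn d (cR c) hdegR)
    have hβle : β ≤ ((2*q-1:ℕ):ℝ)^(d-1) * ES :=
      hroot B _ hB0 (by positivity) (ihn (d-1) (cS c) hdegS)
    have hKβ : ((2*q-1:ℕ):ℝ) * β ≤ ((2*q-1:ℕ):ℝ)^d * ES := by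
      rcases Nat.eq_zero_or_pos d with rfl | hd
      · have hS0 : ∀ y, Sf y = 0 := by
          intro y; rw [hSf]; unfold Qf
          apply Finset.sum_eq_zero
          intro T _
          have hz : cS c T = 0 := by
            unfold cS; apply hdeg
            rw [Finset.card_insert_of_notMem (zero_not_mem_map T), Finset.card_map]
            omega
          rw [hz, zero_mul]
        have hB' : B = 0 := by
          rw [hB]
          have : ∀ y : Fin n → Bool, Sf y ^ (2*q) = 0 := by
            intro y; rw [hS0 y]; exact zero_pow (by omega)
          rw [Finset.sum_congr rfl (fun y _ => this y), Finset.sum_const_zero, zero_div]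
        have hβ' : β = 0 := by
          rw [hβ, hB', Real.zero_rpow (by positivity : ((q:ℝ)⁻¹) ≠ 0)]
        rw [hβ', mul_zero, pow_zero, one_mul]
        exact hES0
      · calc ((2*q-1:ℕ):ℝ) * β ≤ ((2*q-1:ℕ):ℝ) * (((2*q-1:ℕ):ℝ)^(d-1) * ES) :=
            mul_le_mul_of_nonneg_left hβle hK0
          _ = ((2*q-1:ℕ):ℝ)^d * ES := by
            rw [← mul_assoc, ← pow_succ', show d-1+1 = d from by omega]
    have hαβ : α + ((2*q-1:ℕ):ℝ)*β ≤ ((2*q-1:ℕ):ℝ)^d * (ER + ES) := by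
      rw [mul_add]
      exact add_le_add hαle hKβ
    have hE2 : (∑ x : Fin (n+1) → Bool, Qf c x ^ 2) / 2^(n+1) = ER + ES := by
      rw [cube_sum]
      have hpt2 : ∀ y, Qf c (Fin.cons true y)^2 + Qf c (Fin.cons false y)^2
          = 2*(R y^2 + Sf y^2) := by
        intro y; rw [decomp, decomp, hpmt, hpmf]; ring
      rw [Finset.sum_congr rfl (fun y _ => hpt2 y), ← Finset.mul_sum, pow_succ,
        mul_comm ((2:ℝ)^n) 2, mul_div_mul_left _ _ (two_ne_zero), hER, hES,
        Finset.sum_add_distrib, add_div]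
    calc (∑ x : Fin (n+1) → Bool, Qf c x ^ (2*q)) / 2^(n+1)
        ≤ (α + ((2*q-1:ℕ):ℝ)*β)^q := hsum
      _ ≤ (((2*q-1:ℕ):ℝ)^d * (ER + ES))^q :=
          pow_le_pow_left₀ (add_nonneg hα0 (mul_nonneg hK0 hβ0)) hαβ q
      _ = _ := by rw [← hE2]

lemma stmt1' (n d : ℕ) (δ : ℝ) (hδ : 0 ≤ δ) (c : Finset (Fin n) → ℝ)
    (hdeg : ∀ S : Finset (Fin n), d < S.card → c S = 0)
    (μ : (Fin n → Bool) → ℝ) (hμ0 : ∀ x, 0 ≤ μ x) (hμ1 : ∑ x, μ x = 1)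
    (hbias : ∀ S : Finset (Fin n), S.Nonempty →
      |∑ x, μ x * ∏ i ∈ S, pm (x i)| ≤ δ)
    (p : ℕ) (hp : 2 ≤ p) (hpe : Even p) :
    ∑ x, μ x * Qf c x ^ p ≤
      ((p : ℝ) - 1) ^ (p * d / 2) * Real.sqrt (∑ S, c S ^ 2) ^ p
      + (∑ S, |c S|) ^ p * δ := by
  obtain ⟨q, rfl⟩ := hpe
  have hq : 1 ≤ q := by omega
  rw [show q + q = 2*q from by ring] at hp ⊢
  have hy0 : (0:ℝ) ≤ ∑ S : Finset (Fin n), c S ^ 2 := Finset.sum_nonneg fun S _ => sq_nonneg _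
  have hKc : (((2*q:ℕ)):ℝ) - 1 = ((2*q-1:ℕ):ℝ) := by
    push_cast [Nat.cast_sub (by omega : 1 ≤ 2*q)]
    ring
  have hdiv : 2*q*d/2 = q*d := by
    rw [mul_assoc, Nat.mul_div_cancel_left _ (by norm_num : 0 < 2)]
  rw [hdiv, hKc]
  have hsqrt : Real.sqrt (∑ S : Finset (Fin n), c S ^ 2) ^ (2*q)
      = (∑ S : Finset (Fin n), c S ^ 2) ^ q := by
    rw [pow_mul, Real.sq_sqrt hy0]
  rw [hsqrt]
  calc ∑ x, μ x * Qf c x ^ (2*q)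
      ≤ (∑ x : Fin n → Bool, Qf c x ^ (2*q))/2^n + (∑ S, |c S|)^(2*q) * δ :=
        partA c δ hδ μ hμ1 hbias
    _ ≤ (((2*q-1:ℕ):ℝ)^d * ((∑ x : Fin n → Bool, Qf c x ^ 2)/2^n))^q
          + (∑ S, |c S|)^(2*q) * δ :=
        add_le_add_left (hyper q hq n d c hdeg) _
    _ = ((2*q-1:ℕ):ℝ)^(q*d) * (∑ S : Finset (Fin n), c S ^ 2)^q
          + (∑ S, |c S|)^(2*q) * δ := by
        rw [parseval c, mul_pow, ← pow_mul, Nat.mul_comm d q]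

theorem stmt1 (n d : ℕ) (δ : ℝ) (hδ : 0 ≤ δ) (c : Finset (Fin n) → ℝ)
    (hdeg : ∀ S : Finset (Fin n), d < S.card → c S = 0)
    (μ : (Fin n → Bool) → ℝ) (hμ0 : ∀ x, 0 ≤ μ x) (hμ1 : ∑ x, μ x = 1)
    (hbias : ∀ S : Finset (Fin n), S.Nonempty →
      |∑ x, μ x * ∏ i ∈ S, pm (x i)| ≤ δ)
    (p : ℕ) (hp : 2 ≤ p) (hpe : Even p) :
    ∑ x, μ x * (∑ S : Finset (Fin n), c S * ∏ i ∈ S, pm (x i)) ^ p ≤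
      ((p : ℝ) - 1) ^ (p * d / 2) * Real.sqrt (∑ S, c S ^ 2) ^ p
      + (∑ S, |c S|) ^ p * δ := by
  exact stmt1' n d δ hδ c hdeg μ hμ0 hμ1 hbias p hp hpe
end

section
/- Let v ∈ ℝ^n and let H = {h : [n] → [m]} be a δ-biased family of hash functions. For h ∈ H define h(v) = Σ_{j=1}^m ‖v restricted to h^{−1}(j)‖_2^4. Then for every integer p ≥ 2, E_{h}[h(v)^p] ≤ O(p)^{2p}·(‖v‖_2^4/m)^p + O(p)^{2p}·‖v‖_4^{4p} + m^p·‖v‖_2^{4p}·δ. -/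
open Finset
set_option maxHeartbeats 1000000

namespace S3
open scoped Classical
variable {n m p : ℕ}

noncomputable section

def occ (t : Fin p × Bool → Fin n) (i : Fin n) : ℕ := #(univ.filter fun s => t s = i)

def lonely (t : Fin p × Bool → Fin n) : Finset (Fin n) := univ.filter fun i => occ t i = 1

def Tset (t : Fin p × Bool → Fin n) : Finset (Fin n) := univ.image t

lemma mem_lonely {t : Fin p × Bool → Fin n} {i : Fin n} : i ∈ lonely t ↔ occ t i = 1 := by
  simp [lonely]

lemma mem_Tset {t : Fin p × Bool → Fin n} {i : Fin n} : i ∈ Tset t ↔ ∃ s, t s = i := by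
  simp [Tset]

def partner (s : Fin p × Bool) : Fin p × Bool := (s.1, !s.2)

@[simp] lemma partner_partner (s : Fin p × Bool) : partner (partner s) = s := by
  simp [partner]

lemma partner_ne (s : Fin p × Bool) : partner s ≠ s := by
  rcases s with ⟨k, b⟩; cases b <;> simp [partner]

def pos (hp : 0 < p) (t : Fin p × Bool → Fin n) (i : Fin n) : Fin p × Bool :=
  if h : ∃ s, t s = i then h.choose else (⟨0, hp⟩, true)

lemma pos_spec (hp : 0 < p) (t : Fin p × Bool → Fin n) {i : Fin n} (h : ∃ s, t s = i) :
    t (pos hp t i) = i := by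
  rw [pos, dif_pos h]; exact h.choose_spec

lemma occ_exists {t : Fin p × Bool → Fin n} {i : Fin n} (h : occ t i = 1) : ∃ s, t s = i := by
  have : (univ.filter fun s => t s = i).Nonempty := by
    rw [← Finset.card_pos, ← occ, h]; norm_num
  obtain ⟨s, hs⟩ := this
  exact ⟨s, (Finset.mem_filter.mp hs).2⟩

lemma pos_uniq (hp : 0 < p) {t : Fin p × Bool → Fin n} {i : Fin n} (h1 : occ t i = 1)
    {s : Fin p × Bool} (hs : t s = i) : s = pos hp t i := by
  have h2 : t (pos hp t i) = i := pos_spec hp t ⟨s, hs⟩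
  have hc : #(univ.filter fun s => t s = i) ≤ 1 := by rw [← occ, h1]
  exact Finset.card_le_one.mp hc s (by simp [hs]) _ (by simp [h2])

def Pmap (hp : 0 < p) (t : Fin p × Bool → Fin n) (i : Fin n) : Fin n :=
  t (partner (pos hp t i))

lemma Pmap_ne (hp : 0 < p) {t : Fin p × Bool → Fin n} {i : Fin n} (h1 : occ t i = 1) :
    Pmap hp t i ≠ i := by
  intro hcon
  exact partner_ne (pos hp t i) (pos_uniq hp h1 hcon)

lemma Pmap_Pmap (hp : 0 < p) {t : Fin p × Bool → Fin n} {i : Fin n} (h1 : occ t i = 1)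
    (h2 : occ t (Pmap hp t i) = 1) : Pmap hp t (Pmap hp t i) = i := by
  have hpos : partner (pos hp t i) = pos hp t (Pmap hp t i) := pos_uniq hp h2 rfl
  rw [Pmap, ← hpos, partner_partner, pos_spec hp t (occ_exists h1)]

def SS (hp : 0 < p) (t : Fin p × Bool → Fin n) : Finset (Fin n) :=
  (lonely t).filter fun i => Pmap hp t i ∉ lonely t ∨ i < Pmap hp t i

lemma mem_SS {hp : 0 < p} {t : Fin p × Bool → Fin n} {i : Fin n} :
    i ∈ SS hp t ↔ i ∈ lonely t ∧ (Pmap hp t i ∉ lonely t ∨ i < Pmap hp t i) := by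
  simp [SS]

lemma SS_subset_lonely (hp : 0 < p) (t : Fin p × Bool → Fin n) : SS hp t ⊆ lonely t :=
  Finset.filter_subset _ _

lemma lonely_subset_Tset (t : Fin p × Bool → Fin n) : lonely t ⊆ Tset t := by
  intro i hi
  exact mem_Tset.mpr (occ_exists (mem_lonely.mp hi))

lemma SS_subset_Tset (hp : 0 < p) (t : Fin p × Bool → Fin n) : SS hp t ⊆ Tset t :=
  (SS_subset_lonely hp t).trans (lonely_subset_Tset t)

lemma Pmap_not_SS (hp : 0 < p) {t : Fin p × Bool → Fin n} {i : Fin n} (hi : i ∈ SS hp t) :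
    Pmap hp t i ∉ SS hp t := by
  intro hcon
  obtain ⟨hil, hcond⟩ := mem_SS.mp hi
  obtain ⟨hpl, hpcond⟩ := mem_SS.mp hcon
  have h1 : occ t i = 1 := mem_lonely.mp hil
  have h2 : occ t (Pmap hp t i) = 1 := mem_lonely.mp hpl
  have hpp : Pmap hp t (Pmap hp t i) = i := Pmap_Pmap hp h1 h2
  rcases hcond with h | h
  · exact h hpl
  · rcases hpcond with h' | h'
    · rw [hpp] at h'; exact h' hil
    · rw [hpp] at h'
      exact absurd h (not_lt.mpr h'.le)

lemma lonely_card_le (hp : 0 < p) (t : Fin p × Bool → Fin n) :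
    (lonely t).card ≤ 2 * (SS hp t).card := by
  have hsub : lonely t ⊆ (lonely t \ SS hp t) ∪ SS hp t := by
    intro i hi
    by_cases h : i ∈ SS hp t
    · exact Finset.mem_union_right _ h
    · exact Finset.mem_union_left _ (Finset.mem_sdiff.mpr ⟨hi, h⟩)
  have hinj : #(lonely t \ SS hp t) ≤ #(SS hp t) := by
    apply Finset.card_le_card_of_injOn (Pmap hp t)
    · intro i hi
      obtain ⟨hil, hins⟩ := Finset.mem_sdiff.mp hi
      have h1 : occ t i = 1 := mem_lonely.mp hil
      rw [mem_SS, not_and_or] at hins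
      rcases hins with h | h
      · exact absurd hil h
      · push_neg at h
        obtain ⟨hpl, hnlt⟩ := h
        have h2 : occ t (Pmap hp t i) = 1 := mem_lonely.mp hpl
        have hne : Pmap hp t i ≠ i := Pmap_ne hp h1
        have hlt : Pmap hp t i < i := lt_of_le_of_ne hnlt hne
        refine mem_SS.mpr ⟨hpl, Or.inr ?_⟩
        rw [Pmap_Pmap hp h1 h2]
        exact hlt
    · intro i hi i' hi' heq
      obtain ⟨hil, hins⟩ := Finset.mem_sdiff.mp hi
      obtain ⟨hil', hins'⟩ := Finset.mem_sdiff.mp hi'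
      have h1 : occ t i = 1 := mem_lonely.mp hil
      have h1' : occ t i' = 1 := mem_lonely.mp hil'
      rw [mem_SS, not_and_or] at hins
      rcases hins with h | h
      · exact absurd hil h
      · push_neg at h
        have h2 : occ t (Pmap hp t i) = 1 := mem_lonely.mp h.1
        calc i = Pmap hp t (Pmap hp t i) := (Pmap_Pmap hp h1 h2).symm
        _ = Pmap hp t (Pmap hp t i') := by rw [heq]
        _ = i' := by
            rw [heq] at h2
            exact Pmap_Pmap hp h1' h2
  calc (lonely t).card ≤ #((lonely t \ SS hp t) ∪ SS hp t) := Finset.card_le_card hsub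
  _ ≤ #(lonely t \ SS hp t) + #(SS hp t) := Finset.card_union_le _ _
  _ ≤ 2 * (SS hp t).card := by omega

lemma sum_occ (t : Fin p × Bool → Fin n) : ∑ i ∈ Tset t, occ t i = 2 * p := by
  have := Finset.card_eq_sum_card_fiberwise (f := t) (s := univ) (t := Tset t)
    (fun s _ => mem_Tset.mpr ⟨s, rfl⟩)
  simp only [Finset.card_univ, Fintype.card_prod, Fintype.card_fin, Fintype.card_bool] at this
  simp only [occ]
  omega

lemma occ_pos {t : Fin p × Bool → Fin n} {i : Fin n} (hi : i ∈ Tset t) : 1 ≤ occ t i := by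
  obtain ⟨s, hs⟩ := mem_Tset.mp hi
  rw [occ, Nat.succ_le_iff, Finset.card_pos]
  exact ⟨s, by simp [hs]⟩

lemma Tcard_le (hp : 0 < p) (t : Fin p × Bool → Fin n) :
    (Tset t).card ≤ p + (SS hp t).card := by
  classical
  have hsplit := Finset.sum_filter_add_sum_filter_not (Tset t) (fun i => occ t i = 1) (occ t)
  have hfl : (Tset t).filter (fun i => occ t i = 1) = lonely t := by
    ext i
    constructor
    · intro h; exact mem_lonely.mpr (Finset.mem_filter.mp h).2
    · intro h; exact Finset.mem_filter.mpr ⟨lonely_subset_Tset t h, mem_lonely.mp h⟩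
  have h1 : ∑ i ∈ (Tset t).filter (fun i => occ t i = 1), occ t i = (lonely t).card := by
    rw [hfl]
    rw [Finset.sum_congr rfl (fun i hi => mem_lonely.mp hi)]
    simp
  have h2 : 2 * #((Tset t).filter fun i => ¬occ t i = 1)
      ≤ ∑ i ∈ (Tset t).filter (fun i => ¬occ t i = 1), occ t i := by
    have := Finset.card_nsmul_le_sum ((Tset t).filter fun i => ¬occ t i = 1) (occ t) 2
      (fun i hi => by
        obtain ⟨hiT, hne⟩ := Finset.mem_filter.mp hi
        have := occ_pos hiT
        omega)
    simpa [mul_comm] using this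
  have hcard := Finset.card_filter_add_card_filter_not (s := Tset t)
    (fun i => occ t i = 1)
  rw [hfl] at hcard
  have hso := sum_occ t
  have hlc := lonely_card_le hp t
  omega


def Con (t : Fin p × Bool → Fin n) (J : Fin p → Fin m) : Prop :=
  ∀ s s' : Fin p × Bool, t s = t s' → J s.1 = J s'.1

lemma card_con (hp : 0 < p) (t : Fin p × Bool → Fin n) :
    #(univ.filter fun J : Fin p → Fin m => Con t J) ≤ m ^ ((Tset t \ SS hp t).card) := by
  classical
  have hcard : #((Tset t \ SS hp t).pi fun _ => (univ : Finset (Fin m)))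
      = m ^ ((Tset t \ SS hp t).card) := by
    rw [Finset.card_pi]
    simp [Finset.prod_const]
  rw [← hcard]
  apply Finset.card_le_card_of_injOn
    (fun J => fun i _ => J (pos hp t i).1)
  · exact fun J _ => Finset.mem_pi.mpr fun i hi => Finset.mem_univ _
  · intro J hJ J' hJ' heq
    simp only [Finset.coe_filter, Set.mem_setOf_eq] at hJ hJ'
    have hcJ : Con t J := hJ.2
    have hcJ' : Con t J' := hJ'.2
    have key : ∀ i (hi : i ∈ Tset t \ SS hp t), J (pos hp t i).1 = J' (pos hp t i).1 := by
      intro i hi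
      exact congrFun (congrFun heq i) hi
    funext k
    by_cases hc : t (k, true) ∈ SS hp t
    · -- lonely case: use partner index
      have h1 : occ t (t (k, true)) = 1 := mem_lonely.mp (SS_subset_lonely hp t hc)
      have hpos1 : pos hp t (t (k, true)) = (k, true) := (pos_uniq hp h1 rfl).symm
      have hPval : Pmap hp t (t (k, true)) = t (k, false) := by
        rw [Pmap, hpos1]; rfl
      have hPmem : Pmap hp t (t (k, true)) ∈ Tset t \ SS hp t := by
        refine Finset.mem_sdiff.mpr ⟨?_, Pmap_not_SS hp hc⟩
        rw [hPval]; exact mem_Tset.mpr ⟨(k, false), rfl⟩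
      have hkey := key _ hPmem
      have hchain : ∀ (K : Fin p → Fin m), Con t K →
          K (pos hp t (Pmap hp t (t (k, true)))).1 = K k := by
        intro K hK
        have hts : t (pos hp t (Pmap hp t (t (k, true)))) = t (k, false) := by
          rw [pos_spec hp t (i := Pmap hp t (t (k, true))) ⟨partner (pos hp t (t (k,true))), rfl⟩]
          exact hPval
        have := hK _ _ hts
        simpa using this
      rw [← hchain J hcJ, ← hchain J' hcJ', hkey]
    · have hmem : t (k, true) ∈ Tset t \ SS hp t :=
        Finset.mem_sdiff.mpr ⟨mem_Tset.mpr ⟨(k, true), rfl⟩, hc⟩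
      have hkey := key _ hmem
      have hchain : ∀ (K : Fin p → Fin m), Con t K →
          K (pos hp t (t (k, true))).1 = K k := by
        intro K hK
        have hts : t (pos hp t (t (k, true))) = t (k, true) :=
          pos_spec hp t ⟨(k, true), rfl⟩
        have := hK _ _ hts
        simpa using this
      rw [← hchain J hcJ, ← hchain J' hcJ', hkey]


lemma ind_sum (x y : Fin m) :
    (∑ j : Fin m, (if x = j then (1:ℝ) else 0) * (if y = j then 1 else 0))
      = if x = y then 1 else 0 := by
  rw [Finset.sum_eq_single x]
  · simp [eq_comm]
  · intro b _ hb
    simp [Ne.symm hb]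
  · simp

lemma per_t (hp : 0 < p) (hm : 0 < m) {δ : ℝ} (hδ : 0 ≤ δ)
    (ν : (Fin n → Fin m) → ℝ)
    (hbias : ∀ (T : Finset (Fin n)) (j : Fin n → Fin m),
      |(∑ h, ν h * (if ∀ i ∈ T, h i = j i then (1:ℝ) else 0)) - (1 / (m:ℝ)) ^ T.card| ≤ δ)
    (t : Fin p × Bool → Fin n) :
    ∑ h, ν h * ∏ k : Fin p, (if h (t (k, true)) = h (t (k, false)) then (1:ℝ) else 0)
    ≤ ((Real.sqrt m)⁻¹) ^ (lonely t).card + (m:ℝ) ^ p * δ := by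
  classical
  -- Step 1: expand the product over J
  have step1 : ∀ h : Fin n → Fin m,
      (∏ k : Fin p, (if h (t (k, true)) = h (t (k, false)) then (1:ℝ) else 0))
      = ∑ J : Fin p → Fin m, ∏ s : Fin p × Bool, (if h (t s) = J s.1 then (1:ℝ) else 0) := by
    intro h
    have e1 : ∀ k : Fin p, (if h (t (k, true)) = h (t (k, false)) then (1:ℝ) else 0)
        = ∑ j : Fin m, (if h (t (k, true)) = j then (1:ℝ) else 0) *
            (if h (t (k, false)) = j then 1 else 0) := fun k => (ind_sum _ _).symm
    rw [Finset.prod_congr rfl (fun k _ => e1 k)]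
    rw [Finset.prod_univ_sum]
    rw [← Fintype.piFinset_univ]
    apply Finset.sum_congr rfl
    intro J _
    rw [Fintype.prod_prod_type (f := fun s : Fin p × Bool =>
      (if h (t s) = J s.1 then (1:ℝ) else 0))]
    apply Finset.prod_congr rfl
    intro k _
    rw [show (∏ b : Bool, (if h (t (k, b)) = J k then (1:ℝ) else 0))
        = (if h (t (k, true)) = J k then (1:ℝ) else 0) *
          (if h (t (k, false)) = J k then 1 else 0) by simp]
  simp_rw [step1, Finset.mul_sum]
  rw [Finset.sum_comm]
  -- Step 3: per-J bound
  have step3 : ∀ J : Fin p → Fin m,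
      (∑ h : Fin n → Fin m, ν h * ∏ s : Fin p × Bool, (if h (t s) = J s.1 then (1:ℝ) else 0))
      ≤ if Con t J then ((1 / (m:ℝ)) ^ (Tset t).card + δ) else 0 := by
    intro J
    have boole : ∀ h : Fin n → Fin m,
        (∏ s : Fin p × Bool, (if h (t s) = J s.1 then (1:ℝ) else 0))
        = if (∀ s : Fin p × Bool, h (t s) = J s.1) then (1:ℝ) else 0 := by
      intro h
      rw [Finset.prod_boole]
      simp
    by_cases hcon : Con t J
    · rw [if_pos hcon]
      set j : Fin n → Fin m := fun i =>
        if hi : ∃ s, t s = i then J (pos hp t i).1 else ⟨0, hm⟩ with hj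
      have hJs : ∀ s : Fin p × Bool, j (t s) = J s.1 := by
        intro s
        have he : ∃ s', t s' = t s := ⟨s, rfl⟩
        rw [hj]
        simp only [dif_pos he]
        exact hcon _ _ (pos_spec hp t he)
      have hiff : ∀ h : Fin n → Fin m,
          (∀ s : Fin p × Bool, h (t s) = J s.1) ↔ (∀ i ∈ Tset t, h i = j i) := by
        intro h
        constructor
        · intro hh i hi
          obtain ⟨s, hs⟩ := mem_Tset.mp hi
          rw [← hs, hh s, hJs s]
        · intro hh s
          rw [hh (t s) (mem_Tset.mpr ⟨s, rfl⟩), hJs s]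
      have heqsum : (∑ h : Fin n → Fin m, ν h * ∏ s : Fin p × Bool,
            (if h (t s) = J s.1 then (1:ℝ) else 0))
          = ∑ h : Fin n → Fin m, ν h * (if ∀ i ∈ Tset t, h i = j i then (1:ℝ) else 0) := by
        apply Finset.sum_congr rfl
        intro h _
        rw [boole h]
        congr 1
        exact if_congr (hiff h) rfl rfl
      rw [heqsum]
      have := hbias (Tset t) j
      rw [abs_le] at this
      linarith [this.2]
    · rw [if_neg hcon]
      have hzero : ∀ h : Fin n → Fin m,
          (∏ s : Fin p × Bool, (if h (t s) = J s.1 then (1:ℝ) else 0)) = 0 := by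
        intro h
        rw [boole h]
        rw [if_neg]
        intro hall
        apply hcon
        intro s s' hss
        rw [← hall s, ← hall s', hss]
      simp_rw [hzero]
      simp
  -- Step 4: sum the per-J bounds
  have step4 : (∑ J : Fin p → Fin m, ∑ h : Fin n → Fin m,
        ν h * ∏ s : Fin p × Bool, (if h (t s) = J s.1 then (1:ℝ) else 0))
      ≤ #(univ.filter fun J : Fin p → Fin m => Con t J) *
          ((1 / (m:ℝ)) ^ (Tset t).card + δ) := by
    calc _ ≤ ∑ J : Fin p → Fin m,
          (if Con t J then ((1 / (m:ℝ)) ^ (Tset t).card + δ) else 0) :=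
        Finset.sum_le_sum (fun J _ => step3 J)
    _ = _ := by
        rw [← Finset.sum_filter, Finset.sum_const, nsmul_eq_mul]
  refine step4.trans ?_
  -- Step 5: arithmetic
  have hR : (0:ℝ) ≤ (1 / (m:ℝ)) ^ (Tset t).card + δ := by
    have : (0:ℝ) ≤ (1 / (m:ℝ)) ^ (Tset t).card := by positivity
    linarith
  have hcount : (#(univ.filter fun J : Fin p → Fin m => Con t J) : ℝ)
      ≤ (m:ℝ) ^ ((Tset t \ SS hp t).card) := by
    have := card_con (m := m) hp t
    calc (#(univ.filter fun J : Fin p → Fin m => Con t J) : ℝ)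
        ≤ ((m ^ ((Tset t \ SS hp t).card) : ℕ) : ℝ) := by exact_mod_cast this
    _ = (m:ℝ) ^ ((Tset t \ SS hp t).card) := by push_cast; ring
  calc (#(univ.filter fun J : Fin p → Fin m => Con t J) : ℝ) *
        ((1 / (m:ℝ)) ^ (Tset t).card + δ)
      ≤ (m:ℝ) ^ ((Tset t \ SS hp t).card) * ((1 / (m:ℝ)) ^ (Tset t).card + δ) :=
        mul_le_mul_of_nonneg_right hcount hR
  _ ≤ ((Real.sqrt m)⁻¹) ^ (lonely t).card + (m:ℝ) ^ p * δ := by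
      have hmR : (1:ℝ) ≤ (m:ℝ) := by exact_mod_cast hm
      have hm0 : (0:ℝ) < (m:ℝ) := by positivity
      have hsd : (Tset t \ SS hp t).card = (Tset t).card - (SS hp t).card :=
        Finset.card_sdiff_of_subset (SS_subset_Tset hp t)
      have hsle : (SS hp t).card ≤ (Tset t).card :=
        Finset.card_le_card (SS_subset_Tset hp t)
      rw [mul_add]
      have hterm1 : (m:ℝ) ^ ((Tset t \ SS hp t).card) * (1 / (m:ℝ)) ^ (Tset t).card
          = (1 / (m:ℝ)) ^ (SS hp t).card := by
        have hx : (1 / (m:ℝ)) ^ (Tset t).card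
            = (1 / (m:ℝ)) ^ ((Tset t \ SS hp t).card) * (1 / (m:ℝ)) ^ (SS hp t).card := by
          rw [← pow_add]; congr 1; omega
        rw [hx, ← mul_assoc, ← mul_pow]
        have hone : (m:ℝ) * (1 / (m:ℝ)) = 1 := by field_simp
        rw [hone, one_pow, one_mul]
      have hterm2 : (m:ℝ) ^ ((Tset t \ SS hp t).card) * δ ≤ (m:ℝ) ^ p * δ := by
        apply mul_le_mul_of_nonneg_right _ hδ
        apply pow_le_pow_right₀ hmR
        have := Tcard_le hp t
        omega
      have hterm1' : (1 / (m:ℝ)) ^ (SS hp t).card ≤ ((Real.sqrt m)⁻¹) ^ (lonely t).card := by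
        have hα : ((Real.sqrt m)⁻¹) ^ 2 = 1 / (m:ℝ) := by
          rw [inv_pow, Real.sq_sqrt hm0.le, one_div]
        have h1 : (1 / (m:ℝ)) ^ (SS hp t).card = ((Real.sqrt m)⁻¹) ^ (2 * (SS hp t).card) := by
          rw [pow_mul, hα]
        rw [h1]
        apply pow_le_pow_of_le_one
        · positivity
        · rw [inv_le_one_iff₀]
          right
          exact Real.one_le_sqrt.mpr hmR
        · exact lonely_card_le hp t
      linarith

-- power sum bounds
lemma sum_mul_le (v w : Fin n → ℝ) (hv : ∀ i, 0 ≤ v i) (hw : ∀ i, 0 ≤ w i) :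
    ∑ i, v i * w i ≤ (∑ i, v i) * (∑ i, w i) := by
  rw [Finset.sum_mul_sum]
  apply Finset.sum_le_sum
  intro i _
  calc v i * w i ≤ v i * ∑ j, w j := by
        apply mul_le_mul_of_nonneg_left _ (hv i)
        exact Finset.single_le_sum (fun j _ => hw j) (Finset.mem_univ i)
  _ = ∑ j, v i * w j := by rw [Finset.mul_sum]

lemma Wle (v : Fin n → ℝ) : ∀ c, 2 ≤ c →
    (∑ i, v i ^ (2 * c)) ≤ (Real.sqrt (∑ i, v i ^ 4)) ^ c := by
  have hβ0 : 0 ≤ Real.sqrt (∑ i, v i ^ 4) := Real.sqrt_nonneg _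
  have hβ2 : (Real.sqrt (∑ i, v i ^ 4)) ^ 2 = ∑ i, v i ^ 4 := by
    rw [Real.sq_sqrt]; positivity
  set β := Real.sqrt (∑ i, v i ^ 4) with hβ
  intro c
  induction c using Nat.strong_induction_on with
  | _ c ih =>
    intro hc
    by_cases h2 : c = 2
    · subst h2
      rw [hβ2]
    by_cases h3 : c = 3
    · subst h3
      have key : (∑ i, v i ^ (2 * 3)) ^ 2 ≤ β ^ 6 := by
        have hcs := Finset.sum_mul_sq_le_sq_mul_sq Finset.univ
          (fun i => v i ^ 2) (fun i => v i ^ 4)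
        have h8 : ∑ i, (v i ^ 4) ^ 2 ≤ (∑ i, v i ^ 4) ^ 2 :=
          Finset.sum_sq_le_sq_sum_of_nonneg (fun i _ => by positivity)
        have he1 : ∀ i : Fin n, v i ^ 2 * v i ^ 4 = v i ^ (2 * 3) := fun i => by ring
        have he2 : ∀ i : Fin n, (v i ^ 2) ^ 2 = v i ^ 4 := fun i => by ring
        simp_rw [he1, he2] at hcs
        calc (∑ i, v i ^ (2 * 3)) ^ 2 ≤ (∑ i, v i ^ 4) * ∑ i, (v i ^ 4) ^ 2 := hcs
        _ ≤ (∑ i, v i ^ 4) * (∑ i, v i ^ 4) ^ 2 := by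
            have hn4 : (0:ℝ) ≤ ∑ i, v i ^ 4 := by positivity
            exact mul_le_mul_of_nonneg_left h8 hn4
        _ = β ^ 6 := by rw [← hβ2]; ring
      have hs0 : (0:ℝ) ≤ ∑ i, v i ^ (2 * 3) :=
        Finset.sum_nonneg fun i _ => by rw [pow_mul]; positivity
      nlinarith [pow_nonneg hβ0 3, key, hs0]
    · -- c ≥ 4
      have hc4 : 4 ≤ c := by omega
      have hcc : c = (c - 2) + 2 := by omega
      have hih := ih (c - 2) (by omega) (by omega)
      calc (∑ i, v i ^ (2 * c)) = ∑ i, v i ^ (2 * (c - 2)) * v i ^ 4 := by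
            apply Finset.sum_congr rfl
            intro i _
            rw [← pow_add]
            congr 1
            omega
      _ ≤ (∑ i, v i ^ (2 * (c - 2))) * (∑ i, v i ^ 4) := by
            apply sum_mul_le <;> intro i
            · have : 2 * (c - 2) = 2 * ((c-2)) := rfl
              have he : v i ^ (2 * (c-2)) = (v i ^ (c-2)) ^ 2 := by rw [← pow_mul, mul_comm]
              rw [he]; positivity
            · positivity
      _ ≤ β ^ (c - 2) * β ^ 2 := by
            apply mul_le_mul hih (le_of_eq hβ2.symm) (by positivity) (by positivity)
      _ = β ^ c := by rw [← pow_add]; congr 1; omega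

lemma xkyNk {x y : ℝ} (hx : 0 ≤ x) (hy : 0 ≤ y) {k N : ℕ} (hk : k ≤ N) :
    x ^ k * y ^ (N - k) ≤ x ^ N + y ^ N := by
  rcases le_total x y with h | h
  · calc x ^ k * y ^ (N - k) ≤ y ^ k * y ^ (N - k) := by
          apply mul_le_mul_of_nonneg_right (pow_le_pow_left₀ hx h k) (by positivity)
    _ = y ^ N := by rw [← pow_add]; congr 1; omega
    _ ≤ x ^ N + y ^ N := le_add_of_nonneg_left (pow_nonneg hx N)
  · calc x ^ k * y ^ (N - k) ≤ x ^ k * x ^ (N - k) := by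
          apply mul_le_mul_of_nonneg_left (pow_le_pow_left₀ hy h _) (by positivity)
    _ = x ^ N := by rw [← pow_add]; congr 1; omega
    _ ≤ x ^ N + y ^ N := le_add_of_nonneg_right (pow_nonneg hy N)

def keyπ (hp : 0 < p) (t : Fin p × Bool → Fin n) : Fin p × Bool → Fin p × Bool :=
  fun s => pos hp t (t s)

lemma keyπ_spec (hp : 0 < p) (t : Fin p × Bool → Fin n) (s : Fin p × Bool) :
    t (keyπ hp t s) = t s := pos_spec hp t ⟨s, rfl⟩

lemma keyπ_eq_iff (hp : 0 < p) (t : Fin p × Bool → Fin n) (s s' : Fin p × Bool) :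
    keyπ hp t s = keyπ hp t s' ↔ t s = t s' := by
  constructor
  · intro h
    rw [← keyπ_spec hp t s, ← keyπ_spec hp t s', h]
  · intro h
    rw [keyπ, keyπ, h]


lemma per_pi (hp : 0 < p) (hn : 0 < n) (v : Fin n → ℝ) (α : ℝ) (hα0 : 0 ≤ α)
    (π : Fin p × Bool → Fin p × Bool) :
    ∑ t ∈ univ.filter (fun t : Fin p × Bool → Fin n => keyπ hp t = π),
      (∏ s : Fin p × Bool, v (t s) ^ 2) * α ^ (lonely t).card
    ≤ ((∑ i, v i ^ 2) * α) ^ (2 * p) + (Real.sqrt (∑ i, v i ^ 4)) ^ (2 * p) := by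
  classical
  have hβ0 : 0 ≤ Real.sqrt (∑ i, v i ^ 4) := Real.sqrt_nonneg _
  have hSv0 : (0:ℝ) ≤ ∑ i, v i ^ 2 := by positivity
  set β := Real.sqrt (∑ i, v i ^ 4) with hβ
  set Sv := ∑ i, v i ^ 2 with hSv
  by_cases hne : (univ.filter (fun t : Fin p × Bool → Fin n => keyπ hp t = π)).Nonempty
  case neg =>
    rw [Finset.not_nonempty_iff_eq_empty] at hne
    rw [hne, Finset.sum_empty]
    positivity
  obtain ⟨t₀, ht₀mem⟩ := hne
  have ht₀ : keyπ hp t₀ = π := (Finset.mem_filter.mp ht₀mem).2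
  have hclass : ∀ t : Fin p × Bool → Fin n, keyπ hp t = π →
      ∀ s s' : Fin p × Bool, (π s = π s' ↔ t s = t s') := by
    intro t ht s s'
    rw [← ht]; exact keyπ_eq_iff hp t s s'
  have htπ : ∀ t : Fin p × Bool → Fin n, keyπ hp t = π → ∀ s, t (π s) = t s := by
    intro t ht s; rw [← ht]; exact keyπ_spec hp t s
  set cfib : Fin p × Bool → ℕ := fun r => #(univ.filter fun s => π s = r) with hcfib
  set uu := #(univ.filter fun r : Fin p × Bool => cfib r = 1) with huu
  have hfibpos : ∀ s : Fin p × Bool, 1 ≤ cfib (π s) := by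
    intro s
    rw [hcfib, Nat.succ_le_iff, Finset.card_pos]
    exact ⟨s, by simp⟩
  have hπfix : ∀ r : Fin p × Bool, cfib r ≠ 0 → π r = r := by
    intro r hr
    have : (univ.filter fun s => π s = r).Nonempty := by
      rw [← Finset.card_pos]
      show 0 < cfib r
      omega
    obtain ⟨s, hs⟩ := this
    have hπs : π s = r := (Finset.mem_filter.mp hs).2
    have : π (π s) = π s := by
      rw [← ht₀]
      show keyπ hp t₀ (keyπ hp t₀ s) = keyπ hp t₀ s
      exact (keyπ_eq_iff hp t₀ _ _).mpr (keyπ_spec hp t₀ s)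
    rw [hπs] at this
    exact this
  -- Claim A : for t in the fiber, the number of lonely indices is uu
  have claimA : ∀ t : Fin p × Bool → Fin n, keyπ hp t = π → (lonely t).card = uu := by
    intro t ht
    rw [huu]
    apply Finset.card_bij (fun i _ => pos hp t i)
    · intro i hi
      have h1 : occ t i = 1 := mem_lonely.mp hi
      have hti : t (pos hp t i) = i := pos_spec hp t (occ_exists h1)
      have hfib : (univ.filter fun s => π s = pos hp t i) = {pos hp t i} := by
        ext s
        simp only [Finset.mem_filter, Finset.mem_univ, true_and, Finset.mem_singleton]
        constructor
        · intro hs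
          have hts : t s = i := by rw [← htπ t ht s, hs, hti]
          exact (pos_uniq hp h1 hts).symm ▸ rfl
        · intro hs; subst hs
          rw [← ht]
          show pos hp t (t (pos hp t i)) = pos hp t i
          rw [hti]
      simp only [Finset.mem_filter, Finset.mem_univ, true_and, hcfib]
      rw [hfib, Finset.card_singleton]
    · intro i1 hi1 i2 hi2 heq
      have h1 : occ t i1 = 1 := mem_lonely.mp hi1
      have h2 : occ t i2 = 1 := mem_lonely.mp hi2
      rw [← pos_spec hp t (occ_exists h1), ← pos_spec hp t (occ_exists h2), heq]
    · intro r hr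
      have hr1 : cfib r = 1 := (Finset.mem_filter.mp hr).2
      have : (univ.filter fun s => π s = r).Nonempty := by
        rw [← Finset.card_pos]
        show 0 < cfib r
        omega
      obtain ⟨s, hs⟩ := this
      have hπs : π s = r := (Finset.mem_filter.mp hs).2
      have hocc : occ t (t s) = 1 := by
        rw [occ]
        have hset : (univ.filter fun s' => t s' = t s) = (univ.filter fun s' => π s' = π s) := by
          ext s'
          simp only [Finset.mem_filter, Finset.mem_univ, true_and]
          exact (hclass t ht s' s).symm
        rw [hset, hπs]
        exact hr1
      refine ⟨t s, mem_lonely.mpr hocc, ?_⟩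
      have : pos hp t (t s) = keyπ hp t s := rfl
      rw [this, ht, hπs]
  -- total fiber count
  have hsumfib : ∑ r : Fin p × Bool, cfib r = 2 * p := by
    have := Finset.card_eq_sum_card_fiberwise (f := π) (s := univ) (t := univ)
      (fun s _ => Finset.mem_univ _)
    simp only [Finset.card_univ, Fintype.card_prod, Fintype.card_fin, Fintype.card_bool] at this
    rw [hcfib, ← this, mul_comm]
  have huule : uu ≤ 2 * p := by
    have h := Finset.card_filter_le (univ : Finset (Fin p × Bool)) (fun r => cfib r = 1)
    have hc : #(univ : Finset (Fin p × Bool)) = 2 * p := by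
      simp [Finset.card_univ, mul_comm]
    omega
  -- encoding
  set i₀ : Fin n := ⟨0, hn⟩ with hi₀
  set G' : (Fin p × Bool) → Fin n → ℝ := fun r i =>
    if cfib r = 0 then (if i = i₀ then 1 else 0) else v i ^ (2 * cfib r) with hG'
  set enc : (Fin p × Bool → Fin n) → (Fin p × Bool → Fin n) := fun t r =>
    if cfib r = 0 then i₀ else t r with henc
  have hG'0 : ∀ r i, 0 ≤ G' r i := by
    intro r i
    rw [hG']
    dsimp only
    split
    · split <;> norm_num
    · rw [pow_mul]; positivity
  have hwt : ∀ t : Fin p × Bool → Fin n, keyπ hp t = π →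
      (∏ s : Fin p × Bool, v (t s) ^ 2) = ∏ r : Fin p × Bool, G' r (enc t r) := by
    intro t ht
    rw [← Finset.prod_fiberwise univ (fun s => π s) (fun s => v (t s) ^ 2)]
    apply Finset.prod_congr rfl
    intro r _
    by_cases h0 : cfib r = 0
    · have hempt : (univ.filter fun s => π s = r) = ∅ := by
        rw [← Finset.card_eq_zero]; exact h0
      rw [hempt, Finset.prod_empty, hG', henc]
      simp [h0]
    · have hrfix : π r = r := hπfix r h0
      have htconst : ∀ s ∈ univ.filter (fun s => π s = r), v (t s) ^ 2 = v (t r) ^ 2 := by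
        intro s hs
        have hπs : π s = r := (Finset.mem_filter.mp hs).2
        have : t s = t r := by
          apply (hclass t ht s r).mp
          rw [hπs, hrfix]
        rw [this]
      rw [Finset.prod_congr rfl htconst, Finset.prod_const]
      show (v (t r) ^ 2) ^ cfib r = G' r (enc t r)
      rw [hG', henc]
      dsimp only
      rw [if_neg h0, if_neg h0, ← pow_mul]
  have hinj : ∀ t1 ∈ univ.filter (fun t : Fin p × Bool → Fin n => keyπ hp t = π),
      ∀ t2 ∈ univ.filter (fun t : Fin p × Bool → Fin n => keyπ hp t = π),
      enc t1 = enc t2 → t1 = t2 := by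
    intro t1 h1 t2 h2 heq
    have ht1 : keyπ hp t1 = π := (Finset.mem_filter.mp h1).2
    have ht2 : keyπ hp t2 = π := (Finset.mem_filter.mp h2).2
    funext s
    have hc : cfib (π s) ≠ 0 := by have := hfibpos s; omega
    have e1 : t1 s = enc t1 (π s) := by
      rw [henc]; dsimp only; rw [if_neg hc, htπ t1 ht1 s]
    have e2 : t2 s = enc t2 (π s) := by
      rw [henc]; dsimp only; rw [if_neg hc, htπ t2 ht2 s]
    rw [e1, e2, heq]
  -- Claim B
  have claimB : ∑ t ∈ univ.filter (fun t : Fin p × Bool → Fin n => keyπ hp t = π),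
      (∏ s : Fin p × Bool, v (t s) ^ 2) ≤ ∏ r : Fin p × Bool, (∑ i, G' r i) := by
    have h1 : ∑ t ∈ univ.filter (fun t : Fin p × Bool → Fin n => keyπ hp t = π),
        (∏ s : Fin p × Bool, v (t s) ^ 2)
        = ∑ f ∈ (univ.filter (fun t : Fin p × Bool → Fin n => keyπ hp t = π)).image enc,
            ∏ r : Fin p × Bool, G' r (f r) := by
      rw [Finset.sum_image hinj]
      apply Finset.sum_congr rfl
      intro t ht
      exact hwt t (Finset.mem_filter.mp ht).2
    rw [h1]
    have h2 : ∑ f ∈ (univ.filter (fun t : Fin p × Bool → Fin n => keyπ hp t = π)).image enc,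
        ∏ r : Fin p × Bool, G' r (f r)
        ≤ ∑ f : Fin p × Bool → Fin n, ∏ r : Fin p × Bool, G' r (f r) := by
      apply Finset.sum_le_sum_of_subset_of_nonneg (Finset.subset_univ _)
      intro f _ _
      exact Finset.prod_nonneg (fun r _ => hG'0 r (f r))
    refine h2.trans ?_
    rw [Finset.prod_univ_sum (fun _ => (univ : Finset (Fin n))) (fun r i => G' r i)]
    rw [Fintype.piFinset_univ]
  -- Claim C
  have hGsum : ∀ r : Fin p × Bool, (∑ i, G' r i)
      = if cfib r = 0 then 1 else ∑ i, v i ^ (2 * cfib r) := by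
    intro r
    rw [hG']
    dsimp only
    by_cases h0 : cfib r = 0
    · rw [if_pos h0]
      simp [h0]
    · rw [if_neg h0]
      apply Finset.sum_congr rfl
      intro i _
      rw [if_neg h0]
  have claimC : (∏ r : Fin p × Bool, (∑ i, G' r i)) ≤ Sv ^ uu * β ^ (2 * p - uu) := by
    rw [← Finset.prod_filter_mul_prod_filter_not univ (fun r => cfib r = 1)]
    have h1 : (∏ r ∈ univ.filter (fun r => cfib r = 1), (∑ i, G' r i)) = Sv ^ uu := by
      have : ∀ r ∈ univ.filter (fun r => cfib r = 1), (∑ i, G' r i) = Sv := by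
        intro r hr
        have hr1 : cfib r = 1 := (Finset.mem_filter.mp hr).2
        rw [hGsum r, if_neg (by omega), hSv]
        apply Finset.sum_congr rfl
        intro i _
        rw [hr1]
      rw [Finset.prod_congr rfl this, Finset.prod_const, ← huu]
    have h2 : (∏ r ∈ univ.filter (fun r => ¬cfib r = 1), (∑ i, G' r i))
        ≤ ∏ r ∈ univ.filter (fun r => ¬cfib r = 1), β ^ cfib r := by
      apply Finset.prod_le_prod
      · intro r _
        exact Finset.sum_nonneg (fun i _ => hG'0 r i)
      · intro r hr
        have hr1 : cfib r ≠ 1 := (Finset.mem_filter.mp hr).2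
        by_cases h0 : cfib r = 0
        · rw [hGsum r, if_pos h0, h0, pow_zero]
        · rw [hGsum r, if_neg h0]
          exact Wle v (cfib r) (by omega)
    have h3 : (∏ r ∈ univ.filter (fun r => ¬cfib r = 1), β ^ cfib r)
        = β ^ (2 * p - uu) := by
      rw [Finset.prod_pow_eq_pow_sum]
      congr 1
      have hsp := Finset.sum_filter_add_sum_filter_not univ (fun r => cfib r = 1) cfib
      have h4 : ∑ r ∈ univ.filter (fun r => cfib r = 1), cfib r = uu := by
        rw [Finset.sum_congr rfl (fun r hr => (Finset.mem_filter.mp hr).2), Finset.sum_const,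
          smul_eq_mul, mul_one, huu]
      omega
    calc (∏ r ∈ univ.filter (fun r => cfib r = 1), (∑ i, G' r i)) *
          ∏ r ∈ univ.filter (fun r => ¬cfib r = 1), (∑ i, G' r i)
        ≤ Sv ^ uu * ∏ r ∈ univ.filter (fun r => ¬cfib r = 1), β ^ cfib r := by
          rw [h1]
          apply mul_le_mul_of_nonneg_left h2 (pow_nonneg hSv0 uu)
    _ = Sv ^ uu * β ^ (2 * p - uu) := by rw [h3]
  -- assemble
  calc ∑ t ∈ univ.filter (fun t : Fin p × Bool → Fin n => keyπ hp t = π),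
        (∏ s : Fin p × Bool, v (t s) ^ 2) * α ^ (lonely t).card
      = ∑ t ∈ univ.filter (fun t : Fin p × Bool → Fin n => keyπ hp t = π),
        (∏ s : Fin p × Bool, v (t s) ^ 2) * α ^ uu := by
        apply Finset.sum_congr rfl
        intro t ht
        rw [claimA t (Finset.mem_filter.mp ht).2]
  _ = (∑ t ∈ univ.filter (fun t : Fin p × Bool → Fin n => keyπ hp t = π),
        (∏ s : Fin p × Bool, v (t s) ^ 2)) * α ^ uu := by rw [← Finset.sum_mul]
  _ ≤ (Sv ^ uu * β ^ (2 * p - uu)) * α ^ uu := by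
        apply mul_le_mul_of_nonneg_right (claimB.trans claimC) (pow_nonneg hα0 uu)
  _ = (Sv * α) ^ uu * β ^ (2 * p - uu) := by rw [mul_pow]; ring
  _ ≤ (Sv * α) ^ (2 * p) + β ^ (2 * p) := xkyNk (mul_nonneg hSv0 hα0) hβ0 huule

lemma main_sum (hp : 0 < p) (hn : 0 < n) (v : Fin n → ℝ) (α : ℝ) (hα0 : 0 ≤ α) :
    ∑ t : Fin p × Bool → Fin n, (∏ s : Fin p × Bool, v (t s) ^ 2) * α ^ (lonely t).card
    ≤ ((2 * p : ℕ) : ℝ) ^ (2 * p) *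
        (((∑ i, v i ^ 2) * α) ^ (2 * p) + (Real.sqrt (∑ i, v i ^ 4)) ^ (2 * p)) := by
  classical
  rw [← Finset.sum_fiberwise univ (fun t => keyπ hp t)
    (fun t => (∏ s : Fin p × Bool, v (t s) ^ 2) * α ^ (lonely t).card)]
  calc ∑ π : Fin p × Bool → Fin p × Bool,
        ∑ t ∈ univ.filter (fun t : Fin p × Bool → Fin n => keyπ hp t = π),
          (∏ s : Fin p × Bool, v (t s) ^ 2) * α ^ (lonely t).card
      ≤ ∑ _π : Fin p × Bool → Fin p × Bool,
          (((∑ i, v i ^ 2) * α) ^ (2 * p) + (Real.sqrt (∑ i, v i ^ 4)) ^ (2 * p)) :=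
        Finset.sum_le_sum (fun π _ => per_pi hp hn v α hα0 π)
  _ = ((2 * p : ℕ) : ℝ) ^ (2 * p) *
        (((∑ i, v i ^ 2) * α) ^ (2 * p) + (Real.sqrt (∑ i, v i ^ 4)) ^ (2 * p)) := by
      rw [Finset.sum_const, Finset.card_univ, nsmul_eq_mul]
      congr 1
      rw [Fintype.card_fun]
      simp only [Fintype.card_prod, Fintype.card_fin, Fintype.card_bool]
      push_cast
      ring


def pairEquiv (p n : ℕ) : (Fin p × Bool → Fin n) ≃ (Fin p → Fin n × Fin n) where
  toFun := fun t k => (t (k, true), t (k, false))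
  invFun := fun τ s => if s.2 then (τ s.1).1 else (τ s.1).2
  left_inv := by intro t; funext s; rcases s with ⟨k, b⟩; cases b <;> simp
  right_inv := by intro τ; funext k; simp

@[simp] lemma pairEquiv_apply (t : Fin p × Bool → Fin n) (k : Fin p) :
    pairEquiv p n t k = (t (k, true), t (k, false)) := rfl

lemma expand (v : Fin n → ℝ) (h : Fin n → Fin m) (p : ℕ) :
    (∑ j : Fin m, (∑ i ∈ univ.filter fun i => h i = j, v i ^ 2) ^ 2) ^ p
    = ∑ t : Fin p × Bool → Fin n,
        (∏ s : Fin p × Bool, v (t s) ^ 2) *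
          ∏ k : Fin p, (if h (t (k, true)) = h (t (k, false)) then (1:ℝ) else 0) := by
  have inner : (∑ j : Fin m, (∑ i ∈ univ.filter fun i => h i = j, v i ^ 2) ^ 2)
      = ∑ x : Fin n × Fin n, v x.1 ^ 2 * v x.2 ^ 2 *
          (if h x.1 = h x.2 then (1:ℝ) else 0) := by
    rw [Fintype.sum_prod_type]
    have : ∀ j : Fin m, (∑ i ∈ univ.filter fun i => h i = j, v i ^ 2) ^ 2
        = ∑ a : Fin n, ∑ b : Fin n,
            (v a ^ 2 * (if h a = j then (1:ℝ) else 0)) *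
            (v b ^ 2 * (if h b = j then 1 else 0)) := by
      intro j
      rw [sq, ← Finset.sum_mul_sum]
      congr 1 <;> · rw [Finset.sum_filter]; congr 1; ext i; split <;> simp
    simp_rw [this]
    rw [Finset.sum_comm]
    congr 1; ext a
    rw [Finset.sum_comm]
    congr 1; ext b
    have : ∀ j : Fin m, (v a ^ 2 * (if h a = j then (1:ℝ) else 0)) *
            (v b ^ 2 * (if h b = j then 1 else 0))
        = (v a ^2 * v b ^2) * ((if h a = j then (1:ℝ) else 0) * (if h b = j then 1 else 0)) := by
      intro j; ring
    simp_rw [this, ← Finset.mul_sum, ind_sum]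
  rw [inner, Fintype.sum_pow]
  rw [← Equiv.sum_comp (pairEquiv p n)]
  congr 1; funext t
  have : ∀ k : Fin p,
      (fun x : Fin n × Fin n => v x.1 ^ 2 * v x.2 ^ 2 *
        (if h x.1 = h x.2 then (1:ℝ) else 0)) (pairEquiv p n t k)
      = v (t (k, true)) ^ 2 * v (t (k, false)) ^ 2 *
        (if h (t (k, true)) = h (t (k, false)) then (1:ℝ) else 0) := by
    intro k; rfl
  rw [Finset.prod_congr rfl (fun k _ => this k)]
  rw [show (∏ s : Fin p × Bool, v (t s) ^ 2)
      = ∏ k : Fin p, (v (t (k, true)) ^ 2 * v (t (k, false)) ^ 2) by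
    rw [Fintype.prod_prod_type]
    congr 1; funext k
    rw [show (∏ b : Bool, v (t (k, b)) ^ 2) = v (t (k,true))^2 * v (t (k,false))^2 by
      simp [Fintype.prod_bool]]]
  rw [← Finset.prod_mul_distrib]



lemma total_w (v : Fin n → ℝ) :
    ∑ t : Fin p × Bool → Fin n, (∏ s : Fin p × Bool, v (t s) ^ 2)
      = (∑ i, v i ^ 2) ^ (2 * p) := by
  classical
  rw [← Fintype.piFinset_univ,
    ← Finset.prod_univ_sum (fun _ : Fin p × Bool => (univ : Finset (Fin n)))
      (fun _ i => v i ^ 2)]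
  rw [Finset.prod_const, Finset.card_univ]
  congr 1
  simp [mul_comm]

end
end S3

open Finset

theorem stmt3 : ∃ C : ℝ, 0 < C ∧ ∀ (n m : ℕ), 0 < m → ∀ (δ : ℝ),
    ∀ (v : Fin n → ℝ) (ν : (Fin n → Fin m) → ℝ),
    (∀ h, 0 ≤ ν h) → (∑ h, ν h = 1) →
    -- ν is a δ-biased family of hash functions from [n] to [m]
    (∀ (T : Finset (Fin n)) (j : Fin n → Fin m),
      |(∑ h, ν h * (if ∀ i ∈ T, h i = j i then (1:ℝ) else 0)) - (1 / (m:ℝ)) ^ T.card| ≤ δ) →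
    ∀ p : ℕ, 2 ≤ p →
    -- E_h[h(v)^p] where h(v) = ∑_j ‖v|_{h⁻¹(j)}‖₂⁴
    ∑ h, ν h * (∑ j : Fin m, (∑ i ∈ univ.filter fun i => h i = j, v i ^ 2) ^ 2) ^ p ≤
      (C * p) ^ (2 * p) * ((∑ i, v i ^ 2) ^ 2 / m) ^ p
      + (C * p) ^ (2 * p) * (∑ i, v i ^ 4) ^ p
      + (m : ℝ) ^ p * (∑ i, v i ^ 2) ^ (2 * p) * δ := by
  classical
  refine ⟨2, by norm_num, ?_⟩
  intro n m hm δ v ν hν0 hν1 hbias p hp2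
  have hp : 0 < p := by omega
  have hpne : p ≠ 0 := by omega
  have hδ : 0 ≤ δ := by
    have h0 := hbias ∅ (fun _ => ⟨0, hm⟩)
    simpa [hν1] using h0
  rcases Nat.eq_zero_or_pos n with hn | hn0
  · subst hn
    have hLHS : ∑ h : Fin 0 → Fin m, ν h *
        (∑ j : Fin m, (∑ i ∈ univ.filter fun i => h i = j, v i ^ 2) ^ 2) ^ p = 0 := by
      apply Finset.sum_eq_zero
      intro h _
      have hz : ∀ j : Fin m, (∑ i ∈ univ.filter (fun i => h i = j), v i ^ 2) = 0 := by
        intro j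
        apply Finset.sum_eq_zero
        intro i _
        exact absurd i.2 (by omega)
      simp [hz, zero_pow hpne]
    rw [hLHS]
    have h1 : (∑ i : Fin 0, v i ^ 2) = 0 := by simp
    have h2 : (∑ i : Fin 0, v i ^ 4) = 0 := by simp
    rw [h1, h2]
    have h2p : 2 * p ≠ 0 := by omega
    norm_num [zero_pow hpne, zero_pow h2p]
  · -- main case
    have hwnn : ∀ t : Fin p × Bool → Fin n, 0 ≤ ∏ s : Fin p × Bool, v (t s) ^ 2 :=
      fun t => Finset.prod_nonneg (fun s _ => sq_nonneg _)
    have hα0 : (0:ℝ) ≤ (Real.sqrt m)⁻¹ := by positivity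
    have step1 : ∑ h, ν h * (∑ j : Fin m,
          (∑ i ∈ univ.filter fun i => h i = j, v i ^ 2) ^ 2) ^ p
        = ∑ t : Fin p × Bool → Fin n, (∏ s : Fin p × Bool, v (t s) ^ 2) *
            (∑ h, ν h * ∏ k : Fin p,
              (if h (t (k, true)) = h (t (k, false)) then (1:ℝ) else 0)) := by
      have e1 : ∀ h : Fin n → Fin m,
          ν h * (∑ j : Fin m, (∑ i ∈ univ.filter fun i => h i = j, v i ^ 2) ^ 2) ^ p
          = ∑ t : Fin p × Bool → Fin n, ν h * ((∏ s : Fin p × Bool, v (t s) ^ 2) *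
              ∏ k : Fin p, (if h (t (k, true)) = h (t (k, false)) then (1:ℝ) else 0)) := by
        intro h
        rw [S3.expand v h p, Finset.mul_sum]
      rw [Finset.sum_congr rfl (fun h _ => e1 h), Finset.sum_comm]
      apply Finset.sum_congr rfl
      intro t _
      rw [Finset.mul_sum]
      apply Finset.sum_congr rfl
      intro h _
      ring
    rw [step1]
    have step2 : ∑ t : Fin p × Bool → Fin n, (∏ s : Fin p × Bool, v (t s) ^ 2) *
            (∑ h, ν h * ∏ k : Fin p,
              (if h (t (k, true)) = h (t (k, false)) then (1:ℝ) else 0))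
        ≤ ∑ t : Fin p × Bool → Fin n, (∏ s : Fin p × Bool, v (t s) ^ 2) *
            (((Real.sqrt m)⁻¹) ^ (S3.lonely t).card + (m:ℝ) ^ p * δ) := by
      apply Finset.sum_le_sum
      intro t _
      exact mul_le_mul_of_nonneg_left (S3.per_t hp hm hδ ν hbias t) (hwnn t)
    refine step2.trans ?_
    have step3 : ∑ t : Fin p × Bool → Fin n, (∏ s : Fin p × Bool, v (t s) ^ 2) *
            (((Real.sqrt m)⁻¹) ^ (S3.lonely t).card + (m:ℝ) ^ p * δ)
        = (∑ t : Fin p × Bool → Fin n, (∏ s : Fin p × Bool, v (t s) ^ 2) *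
            ((Real.sqrt m)⁻¹) ^ (S3.lonely t).card)
          + (∑ t : Fin p × Bool → Fin n, (∏ s : Fin p × Bool, v (t s) ^ 2)) *
              ((m:ℝ) ^ p * δ) := by
      simp_rw [mul_add]
      rw [Finset.sum_add_distrib, Finset.sum_mul]
    rw [step3]
    have hms := S3.main_sum hp hn0 v ((Real.sqrt m)⁻¹) hα0
    have htw := S3.total_w (p := p) v
    rw [htw]
    have hm0 : (0:ℝ) < (m:ℝ) := by exact_mod_cast hm
    have hα2 : ((Real.sqrt m)⁻¹) ^ 2 = ((m:ℝ))⁻¹ := by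
      rw [inv_pow, Real.sq_sqrt hm0.le]
    have hA : ((∑ i, v i ^ 2) * (Real.sqrt m)⁻¹) ^ (2 * p)
        = ((∑ i, v i ^ 2) ^ 2 / (m:ℝ)) ^ p := by
      rw [pow_mul, mul_pow, hα2, div_eq_mul_inv]
    have hB : (Real.sqrt (∑ i, v i ^ 4)) ^ (2 * p) = (∑ i, v i ^ 4) ^ p := by
      rw [pow_mul, Real.sq_sqrt (by positivity)]
    have hC : (((2 * p : ℕ) : ℝ)) ^ (2 * p) = ((2:ℝ) * p) ^ (2 * p) := by
      push_cast
      ring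
    rw [hA, hB, hC] at hms
    have hδterm : (∑ i, v i ^ 2) ^ (2 * p) * ((m:ℝ) ^ p * δ)
        = (m : ℝ) ^ p * (∑ i, v i ^ 2) ^ (2 * p) * δ := by ring
    rw [hδterm]
    linarith [hms]
end

section
/- Let n, m be positive integers, ε > 0, and let C be a sufficiently large constant. Let H = {h : [n] → [m]} be a k-wise independent family of hash functions with k = C·log(m/ε)/log(m). Let I ⊆ [n] satisfy |I|³ ≤ m. Then with probability at least 1 − ε over h uniform in H, |I| − |h(I)| ≤ k, where h(I) denotes the image of I under h. -/
set_option maxHeartbeats 1000000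


open Finset

/-- If the image of `I` under `h` loses at least `t` elements, there is a set of `t`
collision pairs forming a star forest: distinct first coordinates, second coordinates
disjoint from the first coordinates. -/
private lemma star_exists {n m : ℕ} (h : Fin n → Fin m) (I : Finset (Fin n)) (t : ℕ)
    (ht : t ≤ I.card - (I.image h).card) :
    ∃ P : Finset (Fin n × Fin n), P ⊆ I ×ˢ I ∧ P.card = t ∧
      (P.image Prod.fst).card = t ∧ (∀ p ∈ P, p.2 ∉ P.image Prod.fst) ∧
      (∀ p ∈ P, h p.1 = h p.2) := by
  classical
  set r : Fin n → Fin n := fun a =>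
    if hne : (I.filter (fun b => h b = h a)).Nonempty then
      (I.filter (fun b => h b = h a)).min' hne else a with hrdef
  have hrmem : ∀ a ∈ I, r a ∈ I.filter (fun b => h b = h a) := by
    intro a ha
    have hne : (I.filter (fun b => h b = h a)).Nonempty := ⟨a, by simp [ha]⟩
    simp only [hrdef, dif_pos hne]
    exact Finset.min'_mem _ hne
  have hrI : ∀ a ∈ I, r a ∈ I := fun a ha => (Finset.mem_filter.1 (hrmem a ha)).1
  have hrh : ∀ a ∈ I, h (r a) = h a := fun a ha => (Finset.mem_filter.1 (hrmem a ha)).2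
  have hreq : ∀ a ∈ I, ∀ b ∈ I, h a = h b → r a = r b := by
    intro a ha b hb hab
    have hne : (I.filter (fun c => h c = h b)).Nonempty := ⟨b, by simp [hb]⟩
    simp only [hrdef, hab, dif_pos hne]
  set R : Finset (Fin n) := I.image r with hRdef
  have hRI : R ⊆ I := by
    intro x hx
    obtain ⟨a, ha, rfl⟩ := Finset.mem_image.1 hx
    exact hrI a ha
  have hRim : R.image h = I.image h := by
    apply Finset.Subset.antisymm
    · intro y hy
      obtain ⟨x, hx, rfl⟩ := Finset.mem_image.1 hy
      exact Finset.mem_image_of_mem h (hRI hx)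
    · intro y hy
      obtain ⟨a, ha, rfl⟩ := Finset.mem_image.1 hy
      exact Finset.mem_image.2 ⟨r a, Finset.mem_image_of_mem r ha, hrh a ha⟩
  have hinj : Set.InjOn h R := by
    intro x hx y hy hxy
    obtain ⟨a, ha, rfl⟩ := Finset.mem_image.1 hx
    obtain ⟨b, hb, rfl⟩ := Finset.mem_image.1 hy
    rw [hrh a ha, hrh b hb] at hxy
    exact hreq a ha b hb hxy
  have hRcard : R.card = (I.image h).card := by
    rw [← hRim]
    exact (Finset.card_image_of_injOn hinj).symm
  have hdiff : t ≤ (I \ R).card := by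
    rw [Finset.card_sdiff_of_subset hRI]
    omega
  obtain ⟨S, hSsub, hScard⟩ := Finset.exists_subset_card_eq hdiff
  have hSI : S ⊆ I := fun a ha => (Finset.mem_sdiff.1 (hSsub ha)).1
  have himfst : (S.image (fun a => (a, r a))).image Prod.fst = S := by
    rw [Finset.image_image]
    simp [Function.comp_def]
  refine ⟨S.image (fun a => (a, r a)), ?_, ?_, ?_, ?_, ?_⟩
  · intro p hp
    obtain ⟨a, ha, rfl⟩ := Finset.mem_image.1 hp
    exact Finset.mem_product.2 ⟨hSI ha, hrI a (hSI ha)⟩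
  · rw [Finset.card_image_of_injOn (fun x _ y _ hxy => (Prod.ext_iff.1 hxy).1)]
    exact hScard
  · rw [himfst]
    exact hScard
  · intro p hp
    obtain ⟨a, ha, rfl⟩ := Finset.mem_image.1 hp
    rw [himfst]
    intro hcon
    exact (Finset.mem_sdiff.1 (hSsub hcon)).2 (Finset.mem_image_of_mem r (hSI ha))
  · intro p hp
    obtain ⟨a, ha, rfl⟩ := Finset.mem_image.1 hp
    exact (hrh a (hSI ha)).symm

/-- The probability that all pairs in a star forest `P` of `t` pairs collide is at most
`(1/m)^t`, for a `k`-wise independent family with `2t ≤ k`. -/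
private lemma star_prob {n m : ℕ} (hm : 0 < m) (ν : (Fin n → Fin m) → ℝ) (k : ℕ)
    (hν : ∀ h, 0 ≤ ν h)
    (hH : ∀ (T : Finset (Fin n)), T.card ≤ k → ∀ j : Fin n → Fin m,
      (∑ h, ν h * (if ∀ i ∈ T, h i = j i then (1:ℝ) else 0)) = (1 / (m:ℝ)) ^ T.card)
    (t : ℕ) (h2t : 2 * t ≤ k)
    (P : Finset (Fin n × Fin n)) (hPcard : P.card = t)
    (hfst : (P.image Prod.fst).card = t)
    (hsnd : ∀ p ∈ P, p.2 ∉ P.image Prod.fst) :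
    (∑ h, ν h * (if ∀ p ∈ P, h p.1 = h p.2 then (1:ℝ) else 0)) ≤ (1 / (m:ℝ)) ^ t := by
  classical
  set z : Fin m := ⟨0, hm⟩ with hz
  set A : Finset (Fin n) := P.image Prod.fst with hA
  set B : Finset (Fin n) := P.image Prod.snd with hB
  set T : Finset (Fin n) := A ∪ B with hT
  have hdisj : Disjoint A B := by
    rw [Finset.disjoint_right]
    intro x hx hxA
    obtain ⟨p, hp, rfl⟩ := Finset.mem_image.1 hx
    exact hsnd p hp hxA
  have hTcard : T.card = t + B.card := by
    rw [hT, Finset.card_union_of_disjoint hdisj, hfst]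
  have hBle : B.card ≤ t := by
    rw [← hPcard]
    exact Finset.card_image_le
  have hTk : T.card ≤ k := by omega
  set Jset : Finset (Fin n → Fin m) :=
    Finset.univ.filter (fun j => (∀ p ∈ P, j p.1 = j p.2) ∧ ∀ i, i ∉ T → j i = z) with hJ
  have key : ∀ h : Fin n → Fin m,
      (if ∀ p ∈ P, h p.1 = h p.2 then (1:ℝ) else 0) =
      ∑ j ∈ Jset, (if ∀ i ∈ T, h i = j i then (1:ℝ) else 0) := by
    intro h
    by_cases hcond : ∀ p ∈ P, h p.1 = h p.2
    · rw [if_pos hcond]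
      set jh : Fin n → Fin m := fun i => if i ∈ T then h i else z with hjh
      have hjhmem : jh ∈ Jset := by
        rw [hJ, Finset.mem_filter]
        refine ⟨Finset.mem_univ _, ?_, ?_⟩
        · intro p hp
          have h1 : p.1 ∈ T := Finset.mem_union_left _ (Finset.mem_image_of_mem Prod.fst hp)
          have h2 : p.2 ∈ T := Finset.mem_union_right _ (Finset.mem_image_of_mem Prod.snd hp)
          simp only [hjh, if_pos h1, if_pos h2]
          exact hcond p hp
        · intro i hi
          simp only [hjh, if_neg hi]
      rw [Finset.sum_eq_single_of_mem jh hjhmem]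
      · rw [if_pos]
        intro i hi
        simp only [hjh, if_pos hi]
      · intro b hb hbne
        rw [if_neg]
        intro hagree
        apply hbne
        rw [hJ, Finset.mem_filter] at hb
        funext i
        by_cases hi : i ∈ T
        · rw [← hagree i hi]
          simp only [hjh, if_pos hi]
        · rw [hb.2.2 i hi]
          simp only [hjh, if_neg hi]
    · rw [if_neg hcond]
      symm
      apply Finset.sum_eq_zero
      intro j hj
      rw [hJ, Finset.mem_filter] at hj
      rw [if_neg]
      intro hagree
      apply hcond
      intro p hp
      have h1 : p.1 ∈ T := Finset.mem_union_left _ (Finset.mem_image_of_mem Prod.fst hp)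
      have h2 : p.2 ∈ T := Finset.mem_union_right _ (Finset.mem_image_of_mem Prod.snd hp)
      rw [hagree p.1 h1, hagree p.2 h2]
      exact hj.2.1 p hp
  have hsum : (∑ h, ν h * (if ∀ p ∈ P, h p.1 = h p.2 then (1:ℝ) else 0)) =
      (Jset.card : ℝ) * (1 / (m:ℝ)) ^ T.card := by
    simp_rw [key, Finset.mul_sum]
    rw [Finset.sum_comm]
    rw [Finset.sum_congr rfl (fun j _ => hH T hTk j)]
    rw [Finset.sum_const, nsmul_eq_mul]
  have hJcard : Jset.card ≤ m ^ B.card := by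
    have hinj : Set.InjOn (fun (j : Fin n → Fin m) => (fun b : ↥B => j b)) Jset := by
      intro j hj j' hj' hjj
      simp only [Finset.mem_coe, hJ, Finset.mem_filter] at hj hj'
      funext i
      by_cases hiB : i ∈ B
      · exact congrFun hjj ⟨i, hiB⟩
      · by_cases hiA : i ∈ A
        · obtain ⟨p, hp, rfl⟩ := Finset.mem_image.1 hiA
          have hpB : p.2 ∈ B := Finset.mem_image_of_mem Prod.snd hp
          rw [hj.2.1 p hp, hj'.2.1 p hp]
          exact congrFun hjj ⟨p.2, hpB⟩
        · have hiT : i ∉ T := by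
            rw [hT, Finset.mem_union]
            tauto
          rw [hj.2.2 i hiT, hj'.2.2 i hiT]
    have := Finset.card_le_card_of_injOn (fun (j : Fin n → Fin m) => (fun b : ↥B => j b))
      (fun j _ => Finset.mem_univ _) hinj
    calc Jset.card ≤ (Finset.univ : Finset (↥B → Fin m)).card := this
      _ = m ^ B.card := by
          rw [Finset.card_univ, Fintype.card_fun, Fintype.card_fin, Fintype.card_coe]
  rw [hsum, hTcard]
  have hm' : (0:ℝ) < (m:ℝ) := by exact_mod_cast hm
  have h1 : (Jset.card : ℝ) ≤ (m:ℝ) ^ B.card := by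
    exact_mod_cast hJcard
  have h2 : (0:ℝ) ≤ (1 / (m:ℝ)) ^ (t + B.card) := by positivity
  calc (Jset.card : ℝ) * (1 / (m:ℝ)) ^ (t + B.card)
      ≤ (m:ℝ) ^ B.card * (1 / (m:ℝ)) ^ (t + B.card) := by
        exact mul_le_mul_of_nonneg_right h1 h2
    _ = (1 / (m:ℝ)) ^ t := by
        rw [pow_add]
        field_simp
        rw [← mul_pow, mul_one_div_cancel (ne_of_gt hm'), one_pow]

theorem stmt5 : ∃ C : ℝ, 0 < C ∧ ∀ (n m : ℕ), 0 < n → 0 < m → ∀ (ε : ℝ), 0 < ε →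
    ∀ k : ℕ, C * Real.log (m / ε) / Real.log m ≤ k →
    ∀ (ν : (Fin n → Fin m) → ℝ), (∀ h, 0 ≤ ν h) → (∑ h, ν h = 1) →
    -- ν is a k-wise independent family of hash functions from [n] to [m]
    (∀ (T : Finset (Fin n)), T.card ≤ k → ∀ j : Fin n → Fin m,
      (∑ h, ν h * (if ∀ i ∈ T, h i = j i then (1:ℝ) else 0)) = (1 / (m:ℝ)) ^ T.card) →
    ∀ I : Finset (Fin n), I.card ^ 3 ≤ m →
    1 - ε ≤ ∑ h, ν h * (if I.card - (I.image h).card ≤ k then (1:ℝ) else 0) := by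
  refine ⟨100, by norm_num, ?_⟩
  intro n m hn hm ε hε k hk ν hν0 hν1 hH I hIm
  classical
  have hnonneg : (0:ℝ) ≤ ∑ h, ν h * (if I.card - (I.image h).card ≤ k then (1:ℝ) else 0) := by
    apply Finset.sum_nonneg
    intro h _
    have : (0:ℝ) ≤ (if I.card - (I.image h).card ≤ k then (1:ℝ) else 0) := by
      split_ifs <;> norm_num
    exact mul_nonneg (hν0 h) this
  by_cases hε1 : 1 ≤ ε
  · linarith
  push_neg at hε1
  by_cases hI1 : I.card ≤ 1
  · have hall : ∀ h : Fin n → Fin m, I.card - (I.image h).card ≤ k := by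
      intro h
      rcases Nat.le_one_iff_eq_zero_or_eq_one.1 hI1 with h0 | h1
      · simp [h0]
      · have hne : I.Nonempty := Finset.card_pos.1 (by omega)
        have : 1 ≤ (I.image h).card := Finset.card_pos.2 (hne.image h)
        omega
    have : ∑ h, ν h * (if I.card - (I.image h).card ≤ k then (1:ℝ) else 0) = 1 := by
      have heq : ∑ h, ν h * (if I.card - (I.image h).card ≤ k then (1:ℝ) else 0) = ∑ h, ν h :=
        Finset.sum_congr rfl (fun h _ => by rw [if_pos (hall h), mul_one])
      rw [heq, hν1]
    rw [this]
    linarith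
  push_neg at hI1
  have hI2 : 2 ≤ I.card := hI1
  -- m is large
  have hm8 : 8 ≤ m := le_trans (by nlinarith [Nat.pow_le_pow_left hI2 3]) hIm
  have hm2 : (2:ℝ) ≤ (m:ℝ) := by exact_mod_cast le_trans (by norm_num) hm8
  have hmpos : (0:ℝ) < (m:ℝ) := by linarith
  -- logarithm facts
  set L : ℝ := Real.log m with hLdef
  set E : ℝ := -Real.log ε with hEdef
  have hL : 0 < L := Real.log_pos (by linarith)
  have hE : 0 < E := by
    have := Real.log_neg hε hε1
    simp only [hEdef]
    linarith
  have hlogdiv : Real.log ((m:ℝ) / ε) = L + E := by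
    rw [Real.log_div (ne_of_gt hmpos) (ne_of_gt hε)]
    simp only [hLdef, hEdef]
    ring
  have hk' : 100 * (L + E) ≤ (k:ℝ) * L := by
    have := (div_le_iff₀ hL).1 hk
    rw [hlogdiv] at this
    linarith
  have hk100 : (100:ℝ) ≤ (k:ℝ) := by nlinarith
  have hknat : 100 ≤ k := by exact_mod_cast hk100
  set t : ℕ := k / 2 with htdef
  have h2t : 2 * t ≤ k := by omega
  have hkt1 : k ≤ 2 * t + 1 := by omega
  have htk : t ≤ k := by omega
  have htreal : (k:ℝ) ≤ 2 * (t:ℝ) + 1 := by exact_mod_cast hkt1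
  have htL : 3 * E ≤ (t:ℝ) * L := by
    have hprod := mul_le_mul_of_nonneg_right htreal hL.le
    nlinarith [hE.le, hL.le]
  -- arithmetic: (|I|^2)^t * (1/m)^t ≤ ε
  have hIcast : ((I.card:ℝ)) ^ 3 ≤ (m:ℝ) := by exact_mod_cast hIm
  have harith : (((I.card:ℝ)) ^ 2) ^ t * (1 / (m:ℝ)) ^ t ≤ ε := by
    set x : ℝ := ((I.card:ℝ)) ^ 2 * (1 / (m:ℝ)) with hxdef
    have hx0 : 0 ≤ x := by positivity
    have hx3 : x ^ 3 ≤ 1 / (m:ℝ) := by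
      have h6 : ((I.card:ℝ)) ^ 6 ≤ (m:ℝ) ^ 2 := by
        nlinarith [mul_le_mul hIcast hIcast (by positivity : (0:ℝ) ≤ ((I.card:ℝ)) ^ 3) hmpos.le]
      have hxeq : x ^ 3 = ((I.card:ℝ)) ^ 6 / (m:ℝ) ^ 3 := by
        rw [hxdef]
        field_simp
      rw [hxeq, div_le_div_iff₀ (by positivity) (by positivity)]
      nlinarith [mul_le_mul_of_nonneg_right h6 hmpos.le]
    have hmt : (1 / (m:ℝ)) ^ t ≤ ε ^ 3 := by
      have hpos1 : (0:ℝ) < (1 / (m:ℝ)) ^ t := by positivity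
      have hpos2 : (0:ℝ) < ε ^ 3 := by positivity
      rw [← Real.log_le_log_iff hpos1 hpos2]
      rw [Real.log_pow, Real.log_pow]
      have hlog1m : Real.log (1 / (m:ℝ)) = -L := by
        rw [one_div, Real.log_inv]
      rw [hlog1m]
      have : Real.log ε = -E := by simp [hEdef]
      rw [this]
      push_cast
      linarith
    have hcube : (x ^ t) ^ 3 ≤ ε ^ 3 := by
      calc (x ^ t) ^ 3 = (x ^ 3) ^ t := by ring
        _ ≤ (1 / (m:ℝ)) ^ t := pow_le_pow_left₀ (by positivity) hx3 t
        _ ≤ ε ^ 3 := hmt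
    have := le_of_pow_le_pow_left₀ (n := 3) (by norm_num) (le_of_lt hε) hcube
    calc (((I.card:ℝ)) ^ 2) ^ t * (1 / (m:ℝ)) ^ t = x ^ t := by rw [hxdef, mul_pow]
      _ ≤ ε := this
  -- the union-bound index set
  set X : Finset (Finset (Fin n × Fin n)) :=
    ((I ×ˢ I).powersetCard t).filter
      (fun P => (P.image Prod.fst).card = t ∧ ∀ p ∈ P, p.2 ∉ P.image Prod.fst) with hXdef
  have hXcard : (X.card : ℝ) ≤ (((I.card:ℝ)) ^ 2) ^ t := by
    have h1 : X.card ≤ ((I ×ˢ I).powersetCard t).card := Finset.card_filter_le _ _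
    have h2 : ((I ×ˢ I).powersetCard t).card = (I.card * I.card).choose t := by
      rw [Finset.card_powersetCard, Finset.card_product]
    have h3 : (I.card * I.card).choose t ≤ (I.card * I.card) ^ t := Nat.choose_le_pow _ _
    have : X.card ≤ (I.card * I.card) ^ t := by omega
    calc (X.card : ℝ) ≤ ((I.card * I.card) ^ t : ℕ) := by exact_mod_cast this
      _ = (((I.card:ℝ)) ^ 2) ^ t := by push_cast; ring
  -- bound on the bad event
  have hbad : ∑ h, ν h * (if I.card - (I.image h).card ≤ k then (0:ℝ) else 1) ≤ ε := by
    have step1 : ∑ h, ν h * (if I.card - (I.image h).card ≤ k then (0:ℝ) else 1) ≤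
        ∑ h, ν h * ∑ P ∈ X, (if ∀ p ∈ P, h p.1 = h p.2 then (1:ℝ) else 0) := by
      apply Finset.sum_le_sum
      intro h _
      apply mul_le_mul_of_nonneg_left _ (hν0 h)
      by_cases hgood : I.card - (I.image h).card ≤ k
      · rw [if_pos hgood]
        apply Finset.sum_nonneg
        intro P _
        split_ifs <;> norm_num
      · rw [if_neg hgood]
        have hexc : t ≤ I.card - (I.image h).card :=
          le_trans htk (le_of_lt (Nat.lt_of_not_le hgood))
        obtain ⟨P, hPsub, hPcard, hPfst, hPsnd, hPcol⟩ := star_exists h I t hexc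
        have hPX : P ∈ X := by
          rw [hXdef, Finset.mem_filter, Finset.mem_powersetCard]
          exact ⟨⟨hPsub, hPcard⟩, hPfst, hPsnd⟩
        have hle := Finset.single_le_sum
          (f := fun P => (if ∀ p ∈ P, h p.1 = h p.2 then (1:ℝ) else 0))
          (fun P _ => by split_ifs <;> norm_num) hPX
        exact le_trans (le_of_eq (if_pos hPcol).symm) hle
    have step2 : ∑ h, ν h * ∑ P ∈ X, (if ∀ p ∈ P, h p.1 = h p.2 then (1:ℝ) else 0) =
        ∑ P ∈ X, ∑ h, ν h * (if ∀ p ∈ P, h p.1 = h p.2 then (1:ℝ) else 0) := by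
      simp_rw [Finset.mul_sum]
      rw [Finset.sum_comm]
    have step3 : ∑ P ∈ X, ∑ h, ν h * (if ∀ p ∈ P, h p.1 = h p.2 then (1:ℝ) else 0) ≤
        (X.card : ℝ) * (1 / (m:ℝ)) ^ t := by
      calc ∑ P ∈ X, ∑ h, ν h * (if ∀ p ∈ P, h p.1 = h p.2 then (1:ℝ) else 0)
          ≤ ∑ _P ∈ X, (1 / (m:ℝ)) ^ t := by
            apply Finset.sum_le_sum
            intro P hPX
            rw [hXdef, Finset.mem_filter, Finset.mem_powersetCard] at hPX
            exact star_prob hm ν k hν0 hH t h2t P hPX.1.2 hPX.2.1 hPX.2.2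
        _ = (X.card : ℝ) * (1 / (m:ℝ)) ^ t := by rw [Finset.sum_const, nsmul_eq_mul]
    have step4 : (X.card : ℝ) * (1 / (m:ℝ)) ^ t ≤ ε := by
      calc (X.card : ℝ) * (1 / (m:ℝ)) ^ t ≤ (((I.card:ℝ)) ^ 2) ^ t * (1 / (m:ℝ)) ^ t := by
            apply mul_le_mul_of_nonneg_right hXcard (by positivity)
        _ ≤ ε := harith
    linarith
  -- put it together
  have hsplit : (∑ h, ν h * (if I.card - (I.image h).card ≤ k then (1:ℝ) else 0)) +
      (∑ h, ν h * (if I.card - (I.image h).card ≤ k then (0:ℝ) else 1)) = 1 := by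
    have heq : ∀ h : Fin n → Fin m,
        ν h * (if I.card - (I.image h).card ≤ k then (1:ℝ) else 0) +
        ν h * (if I.card - (I.image h).card ≤ k then (0:ℝ) else 1) = ν h := by
      intro h
      by_cases hgood : I.card - (I.image h).card ≤ k
      · rw [if_pos hgood, if_pos hgood]; ring
      · rw [if_neg hgood, if_neg hgood]; ring
    rw [← Finset.sum_add_distrib, Finset.sum_congr rfl (fun h _ => heq h), hν1]
  linarith
end
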